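/- arXiv:2602.14156 — 4 statements merged into one kernel-verified Lean document; each statement's English description precedes it below -/
import Mathlib

section
/- Fix t ∈ [0,∞) and x ∈ ℝ^N. Let H(t,x,·) : ℝ^N → ℝ be a real-valued convex function, let U(t) be a nonempty subset of ℝ^M, let f(t,x,·) : ℝ^M → ℝ^N be such that the set f(t,x,U(t)) is closed and convex, and let l(t,x,·) : ℝ^M → ℝ. If H(t,x,p) = sup_{u∈U(t)} (⟨p,f(t,x,u)⟩ − l(t,x,u)) for all p ∈ ℝ^N (i.e. (U,f,l) is a representation of H at (t,x)), then dom H*(t,x,·) = f(t,x,U(t)). -/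
open MeasureTheory Set Filter Topology

noncomputable section

namespace HJB

/-- `ℝ^n`. -/
abbrev Euc (n : ℕ) : Type := EuclideanSpace ℝ (Fin n)

/-! ### Legendre–Fenchel conjugate (in the last variable) -/

/-- The Legendre–Fenchel conjugate of a real-valued function on `ℝ^N`,
with values in `ℝ ∪ {±∞}` (it is never `⊥`). -/
def conj {N : ℕ} (h : Euc N → ℝ) (v : Euc N) : EReal :=
  ⨆ p : Euc N, (((inner ℝ v p : ℝ) - h p : ℝ) : EReal)

/-- The effective domain of the conjugate. -/
def domConj {N : ℕ} (h : Euc N → ℝ) : Set (Euc N) := {v | conj h v ≠ ⊤}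

/-- The epigraph of the conjugate. -/
def epiConj {N : ℕ} (h : Euc N → ℝ) : Set (Euc N × ℝ) :=
  {q | conj h q.1 ≤ (q.2 : EReal)}

/-- The graph of the conjugate. -/
def gphConj {N : ℕ} (h : Euc N → ℝ) : Set (Euc N × ℝ) :=
  {q | conj h q.1 = (q.2 : EReal)}

/-- `H*(t,x,v)`, the conjugate of a Hamiltonian in the last variable. -/
def Hstar {N : ℕ} (H : ℝ → Euc N → Euc N → ℝ) (t : ℝ) (x v : Euc N) : EReal :=
  conj (H t x) v

/-! ### Integrability classes -/

/-- `φ ∈ L¹([0,∞);ℝ)`. -/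
def MemL1 (φ : ℝ → ℝ) : Prop := IntegrableOn φ (Ici 0)

/-- `c ∈ L¹_loc([0,∞);[0,∞))`. -/
def MemL1loc (c : ℝ → ℝ) : Prop :=
  (∀ t, 0 ≤ c t) ∧ ∀ b : ℝ, IntegrableOn c (Icc 0 b)

/-- The class `𝓛_loc` : nonnegative, locally integrable on `[0,∞)`, with uniformly
small integrals over short subintervals. -/
def MemLloc (k : ℝ → ℝ) : Prop :=
  MemL1loc k ∧ ∀ ε > (0:ℝ), ∃ σ > (0:ℝ), ∀ a b : ℝ, 0 ≤ a → a ≤ b → b - a ≤ σ →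
    (∫ τ in a..b, k τ) ≤ ε

/-! ### Cones -/

/-- The Bouligand tangent cone `T_A(x) = {ζ : liminf_{τ→0+} dist(x+τζ,A)/τ = 0}`. -/
def tangentConeB {F : Type*} [NormedAddCommGroup F] [NormedSpace ℝ F]
    (A : Set F) (x : F) : Set F :=
  {ζ | ∀ ε > (0:ℝ), ∀ δ > (0:ℝ), ∃ τ : ℝ, 0 < τ ∧ τ < δ ∧
    Metric.infDist (x + τ • ζ) A ≤ ε * τ}

/-- The regular normal cone (polar of the tangent cone). -/
def regNormal {N : ℕ} (A : Set (Euc N)) (x : Euc N) : Set (Euc N) :=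
  {ξ | ∀ ζ ∈ tangentConeB A x, (inner ℝ ζ ξ : ℝ) ≤ 0}

/-- The limiting normal cone. -/
def limNormal {N : ℕ} (A : Set (Euc N)) (x : Euc N) : Set (Euc N) :=
  {ξ | ∃ xs ξs : ℕ → Euc N, (∀ n, xs n ∈ A ∧ ξs n ∈ regNormal A (xs n)) ∧
    Tendsto xs atTop (nhds x) ∧ Tendsto ξs atTop (nhds ξ)}

/-- The set `N¹_{y,η}` of unit vectors in closed convex hulls of limiting normal
cones at boundary points near `y`. -/
def N1set {N : ℕ} (A : Set (Euc N)) (y : Euc N) (η : ℝ) : Set (Euc N) :=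
  {n | ‖n‖ = 1 ∧ ∃ x ∈ frontier A ∩ Metric.closedBall y η,
    n ∈ closure (convexHull ℝ (limNormal A x))}

/-- The outward pointing condition (OPC) for a set-valued velocity map `FF`. -/
def OPC {N : ℕ} (A : Set (Euc N)) (FF : ℝ → Euc N → Set (Euc N)) : Prop :=
  ∃ η > (0:ℝ), ∃ r > (0:ℝ), ∃ Mc : ℝ, 0 ≤ Mc ∧
    ∀ᵐ t ∂(volume.restrict (Ici (0:ℝ))), ∀ y : Euc N,
      (∃ z ∈ frontier A, dist y z ≤ η) →
      ∀ v ∈ FF t y, (∀ ε > (0:ℝ), ∃ n ∈ N1set A y η, (inner ℝ n v : ℝ) ≤ ε) →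
        ∃ w ∈ FF t y, dist w v ≤ Mc ∧
          ∀ n ∈ N1set A y η, r ≤ (inner ℝ n w : ℝ) ∧ r ≤ (inner ℝ n (w - v) : ℝ)

/-- `(OPC)_H` : the OPC condition for `dom H*`. -/
def OPCH {N : ℕ} (H : ℝ → Euc N → Euc N → ℝ) (A : Set (Euc N)) : Prop :=
  OPC A (fun t y => domConj (H t y))

/-! ### Conditions (h)'' and (h)''_H -/

/-- The image set `(f,l)(t,x,U(t))`. -/
def flimg {N M : ℕ} (U : ℝ → Set (Euc M)) (f : ℝ → Euc N → Euc M → Euc N)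
    (l : ℝ → Euc N → Euc M → ℝ) (t : ℝ) (x : Euc N) : Set (Euc N × ℝ) :=
  (fun u => (f t x u, l t x u)) '' U t

/-- Condition (h)'' for a control triple `(U,f,l)`, a constraint set `A`, and
data functions `φ ∈ L¹`, `c ∈ L¹_loc`, `k, q ∈ 𝓛_loc`. -/
def Hpp {N M : ℕ} (U : ℝ → Set (Euc M)) (f : ℝ → Euc N → Euc M → Euc N)
    (l : ℝ → Euc N → Euc M → ℝ) (A : Set (Euc N)) (φ c k q : ℝ → ℝ) : Prop :=
  (∀ O : Set (Euc M), IsOpen O → MeasurableSet {t : ℝ | (U t ∩ O).Nonempty}) ∧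
  (∀ t, (U t).Nonempty ∧ IsClosed (U t)) ∧
  -- (h1)
  (∀ x u, Measurable fun t => f t x u) ∧
  (∀ x u, Measurable fun t => l t x u) ∧
  (∀ t, Continuous fun q : Euc N × Euc M => f t q.1 q.2) ∧
  (∀ t, Continuous fun q : Euc N × Euc M => l t q.1 q.2) ∧
  MemL1 φ ∧ (∀ t, 0 ≤ t → ∀ x u, φ t ≤ l t x u) ∧
  -- (h2)
  MemL1loc c ∧
  (∀ t, 0 ≤ t → ∀ x, ∀ u ∈ U t, ‖f t x u‖ + |l t x u| ≤ c t * (1 + ‖x‖)) ∧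
  -- (h3)
  (∀ t, 0 ≤ t → ∀ x, IsClosed (flimg U f l t x) ∧
    Tendsto (fun y => EMetric.hausdorffEdist (flimg U f l t y) (flimg U f l t x))
      (nhds x) (nhds 0)) ∧
  -- (h4)
  (∀ t, 0 ≤ t → ∀ x, Convex ℝ {y : Euc N × ℝ |
    ∃ u ∈ U t, ∃ r : ℝ, 0 ≤ r ∧ y = (f t x u, l t x u + r)}) ∧
  -- (h5)
  MemLloc q ∧
  (∀ t, 0 ≤ t → ∀ x ∈ frontier A, ∀ u ∈ U t, ‖f t x u‖ + |l t x u| ≤ q t) ∧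
  -- (h6)
  MemLloc k ∧
  (∀ t, 0 ≤ t → ∀ x y, ∀ u ∈ U t,
    ‖f t x u - f t y u‖ + |l t x u - l t y u| ≤ k t * ‖x - y‖)

/-- Condition (h)''_H for a Hamiltonian `H`, a constraint set `A`, a function `λ`,
and data functions `φ ∈ L¹`, `c ∈ L¹_loc`, `k, q ∈ 𝓛_loc`. -/
def HppH {N : ℕ} (H : ℝ → Euc N → Euc N → ℝ) (A : Set (Euc N))
    (lam : ℝ → Euc N → ℝ) (φ c k q : ℝ → ℝ) : Prop :=
  -- (H1)
  (∀ x p, Measurable fun t => H t x p) ∧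
  (∀ t p, Continuous fun x => H t x p) ∧
  (∀ t x, ConvexOn ℝ univ (H t x)) ∧
  -- (H2)
  MemL1 φ ∧ (∀ t, 0 ≤ t → ∀ x, H t x 0 ≤ -φ t) ∧
  -- regularity of λ and of the data
  (∀ t x, 0 ≤ lam t x) ∧
  (∀ x, Measurable fun t => lam t x) ∧
  (∀ t, Continuous fun x => lam t x) ∧
  MemL1loc c ∧ MemLloc k ∧ MemLloc q ∧
  -- (H3)
  (∀ t, 0 ≤ t → ∀ x, lam t x ≤ c t * (1 + ‖x‖)) ∧
  (∀ t, 0 ≤ t → ∀ x ∈ frontier A, lam t x ≤ q t) ∧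
  -- (H4)
  (∀ t, 0 ≤ t → ∀ x y, |lam t x - lam t y| ≤ k t * ‖x - y‖) ∧
  -- (H5)
  (∀ t, 0 ≤ t → ∀ x y p, |H t x p - H t y p| ≤ k t * (1 + ‖p‖) * ‖x - y‖) ∧
  -- (H6)
  (∀ t, 0 ≤ t → ∀ x p p', |H t x p - H t x p'| ≤ lam t x * ‖p - p'‖) ∧
  -- (H7)
  (∀ t, 0 ≤ t → ∀ x v, Hstar H t x v ≠ ⊤ → |(Hstar H t x v).toReal| ≤ lam t x)

/-! ### Trajectories and value functions -/

/-- `x` is locally absolutely continuous on `[t₀,∞)` with a.e. derivative `dx`. -/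
def IsTrajOn {N : ℕ} (x dx : ℝ → Euc N) (t₀ : ℝ) : Prop :=
  (∀ b : ℝ, IntegrableOn dx (Icc t₀ b)) ∧
  ∀ t, t₀ ≤ t → x t = x t₀ + ∫ s in t₀..t, dx s

/-- `S_H(t₀,x₀)` : admissible pairs (trajectory, a.e. derivative) for the
calculus-of-variations problem with constraint set `A`. -/
def SH {N : ℕ} (H : ℝ → Euc N → Euc N → ℝ) (A : Set (Euc N)) (t₀ : ℝ)
    (x₀ : Euc N) : Set ((ℝ → Euc N) × (ℝ → Euc N)) :=
  {p | IsTrajOn p.1 p.2 t₀ ∧ p.1 t₀ = x₀ ∧ (∀ t, t₀ ≤ t → p.1 t ∈ A) ∧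
    ∀ᵐ t ∂(volume.restrict (Ici t₀)), Hstar H t (p.1 t) (p.2 t) ≠ ⊤}

open Classical in
/-- The cost `∫_{t₀}^∞ H*(t,x(t),ẋ(t)) dt ∈ ℝ ∪ {+∞}` of a trajectory. -/
def trajCost {N : ℕ} (H : ℝ → Euc N → Euc N → ℝ) (t₀ : ℝ)
    (p : (ℝ → Euc N) × (ℝ → Euc N)) : EReal :=
  if (∀ᵐ t ∂(volume.restrict (Ici t₀)), Hstar H t (p.1 t) (p.2 t) ≠ ⊤) ∧
     IntegrableOn (fun t => (Hstar H t (p.1 t) (p.2 t)).toReal) (Ici t₀)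
  then (((∫ t in Ici t₀, (Hstar H t (p.1 t) (p.2 t)).toReal) : ℝ) : EReal)
  else ⊤

/-- The value function `V` of the calculus-of-variations problem. -/
def valueV {N : ℕ} (H : ℝ → Euc N → Euc N → ℝ) (A : Set (Euc N)) (t₀ : ℝ)
    (x₀ : Euc N) : EReal :=
  sInf (trajCost H t₀ '' SH H A t₀ x₀)

/-- `S_f(t₀,x₀)` : admissible trajectory-control pairs of the control system. -/
def Sf {N M : ℕ} (U : ℝ → Set (Euc M)) (f : ℝ → Euc N → Euc M → Euc N)
    (A : Set (Euc N)) (t₀ : ℝ) (x₀ : Euc N) :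
    Set ((ℝ → Euc N) × (ℝ → Euc M)) :=
  {p | Measurable p.2 ∧ (∀ᵐ t ∂(volume.restrict (Ici t₀)), p.2 t ∈ U t) ∧
    (∀ b : ℝ, IntegrableOn (fun s => f s (p.1 s) (p.2 s)) (Icc t₀ b)) ∧
    p.1 t₀ = x₀ ∧ (∀ t, t₀ ≤ t → p.1 t ∈ A) ∧
    ∀ t, t₀ ≤ t → p.1 t = x₀ + ∫ s in t₀..t, f s (p.1 s) (p.2 s)}

open Classical in
/-- The cost `∫_{t₀}^∞ l(t,x(t),u(t)) dt ∈ ℝ ∪ {+∞}` of a trajectory-control pair. -/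
def ctrlCost {N M : ℕ} (l : ℝ → Euc N → Euc M → ℝ) (t₀ : ℝ)
    (p : (ℝ → Euc N) × (ℝ → Euc M)) : EReal :=
  if IntegrableOn (fun t => l t (p.1 t) (p.2 t)) (Ici t₀)
  then (((∫ t in Ici t₀, l t (p.1 t) (p.2 t)) : ℝ) : EReal)
  else ⊤

/-- The value function `𝒱` of the optimal control problem. -/
def valueVc {N M : ℕ} (U : ℝ → Set (Euc M)) (f : ℝ → Euc N → Euc M → Euc N)
    (l : ℝ → Euc N → Euc M → ℝ) (A : Set (Euc N)) (t₀ : ℝ) (x₀ : Euc N) : EReal :=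
  sInf (ctrlCost l t₀ '' Sf U f A t₀ x₀)

/-! ### Conditions (B), (B)_H, (LB), (VIC) -/

/-- Condition `(B)_H`. -/
def CondBH {N : ℕ} (H : ℝ → Euc N → Euc N → ℝ) (A : Set (Euc N)) : Prop :=
  (∃ t₀ ≥ (0:ℝ), ∃ x₀ ∈ A, valueV H A t₀ x₀ ≠ ⊤) ∧
  ∃ T > (0:ℝ), ∃ ψ : ℝ → ℝ, (∀ t, 0 ≤ ψ t) ∧ IntegrableOn ψ (Ici T) ∧
    ∀ t₀, T ≤ t₀ → ∀ x₀ ∈ A, valueV H A t₀ x₀ ≠ ⊤ →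
      ∀ p ∈ SH H A t₀ x₀,
        ∀ᵐ t ∂(volume.restrict (Ici t₀)), |(Hstar H t (p.1 t) (p.2 t)).toReal| ≤ ψ t

/-- Condition `(B)`. -/
def CondB {N M : ℕ} (U : ℝ → Set (Euc M)) (f : ℝ → Euc N → Euc M → Euc N)
    (l : ℝ → Euc N → Euc M → ℝ) (A : Set (Euc N)) (T : ℝ) (ψ : ℝ → ℝ) : Prop :=
  (∃ t₀ ≥ (0:ℝ), ∃ x₀ ∈ A, valueVc U f l A t₀ x₀ ≠ ⊤) ∧
  0 < T ∧ (∀ t, 0 ≤ ψ t) ∧ IntegrableOn ψ (Ici T) ∧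
    ∀ t₀, T ≤ t₀ → ∀ x₀ ∈ A, valueVc U f l A t₀ x₀ ≠ ⊤ →
      ∀ p ∈ Sf U f A t₀ x₀,
        ∀ᵐ t ∂(volume.restrict (Ici t₀)), |l t (p.1 t) (p.2 t)| ≤ ψ t

/-- Condition (LB), with the family `ψ r` of integrable bounds. -/
def CondLB {N M : ℕ} (U : ℝ → Set (Euc M)) (f : ℝ → Euc N → Euc M → Euc N)
    (l : ℝ → Euc N → Euc M → ℝ) (A : Set (Euc N)) (ψ : ℝ → ℝ → ℝ) : Prop :=
  ∀ r, 0 < r → (∀ t, 0 ≤ ψ r t) ∧ IntegrableOn (ψ r) (Ici 0) ∧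
    ∀ t₀, 0 ≤ t₀ → ∀ x₀ ∈ A, ‖x₀‖ ≤ r → ∀ p ∈ Sf U f A t₀ x₀,
      ∀ᵐ t ∂(volume.restrict (Ici t₀)), |l t (p.1 t) (p.2 t)| ≤ ψ r t

/-- Condition `(VIC)_H`. -/
def VICH {N : ℕ} (H : ℝ → Euc N → Euc N → ℝ) (A : Set (Euc N)) : Prop :=
  ∃ C : Set ℝ, C ⊆ Ioi 0 ∧ volume (Ioi 0 \ C) = 0 ∧
    ∀ t ∈ C, ∀ x ∈ A,
      (∃ v, Hstar H t x v ≠ ⊤ ∧ v ∈ tangentConeB A x) ∧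
      ∀ v, Hstar H t x v ≠ ⊤ → -v ∈ tangentConeB A x

/-- Condition (VIC) for a dynamics `f` with controls `U`. -/
def VICf {N M : ℕ} (U : ℝ → Set (Euc M)) (f : ℝ → Euc N → Euc M → Euc N)
    (A : Set (Euc N)) : Prop :=
  ∃ C : Set ℝ, C ⊆ Ioi 0 ∧ volume (Ioi 0 \ C) = 0 ∧
    ∀ t ∈ C, ∀ x ∈ A,
      (∃ u ∈ U t, f t x u ∈ tangentConeB A x) ∧
      ∀ u ∈ U t, -(f t x u) ∈ tangentConeB A x

/-! ### Weak solutions -/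

/-- The time–state–value space `ℝ × ℝ^N × ℝ`. -/
abbrev TXR (N : ℕ) : Type := ℝ × Euc N × ℝ

/-- The natural pairing on `ℝ × ℝ^N × ℝ`. -/
def pairTX {N : ℕ} (p q : TXR N) : ℝ :=
  p.1 * q.1 + (inner ℝ p.2.1 q.2.1 : ℝ) + p.2.2 * q.2.2

/-- The regular normal cone in `ℝ × ℝ^N × ℝ` (polar of the tangent cone). -/
def regNormalTX {N : ℕ} (S : Set (TXR N)) (z : TXR N) : Set (TXR N) :=
  {ξ | ∀ ζ ∈ tangentConeB S z, pairTX ζ ξ ≤ 0}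

/-- The epigraph of an extended-real function of `(t,x)`. -/
def epiTX {N : ℕ} (W : ℝ → Euc N → EReal) : Set (TXR N) :=
  {z | W z.1 z.2.1 ≤ (z.2.2 : EReal)}

/-- The epigraph of `W(t,·)`. -/
def epiX {N : ℕ} (W : ℝ → Euc N → EReal) (t : ℝ) : Set (Euc N × ℝ) :=
  {q | W t q.1 ≤ (q.2 : EReal)}

/-- The Fréchet subdifferential of `W` at `(t,x)` (only meaningful when `W t x` is finite). -/
def frSubdiff {N : ℕ} (W : ℝ → Euc N → EReal) (t : ℝ) (x : Euc N) :
    Set (ℝ × Euc N) :=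
  {p | ∀ ε > (0:ℝ), ∃ δ > (0:ℝ), ∀ s : ℝ, ∀ y : Euc N,
    dist ((s, y) : ℝ × Euc N) (t, x) < δ →
    ((((W t x).toReal + p.1 * (s - t) + (inner ℝ p.2 (y - x) : ℝ)
      - ε * dist ((s, y) : ℝ × Euc N) (t, x)) : ℝ) : EReal) ≤ W s y}

/-- A lower semicontinuous `W : [0,∞) × A → ℝ ∪ {+∞}` is a weak solution of
`-W_t + H(t,x,-W_x) = 0` on `(0,∞) × A`. -/
def IsWeakSolution {N : ℕ} (H : ℝ → Euc N → Euc N → ℝ) (A : Set (Euc N))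
    (W : ℝ → Euc N → EReal) : Prop :=
  ∃ C : Set ℝ, C ⊆ Ioi 0 ∧ volume (Ioi 0 \ C) = 0 ∧
    (∀ t ∈ C, ∀ x ∈ frontier A, W t x ≠ ⊤ →
      (∀ p ∈ frSubdiff W t x, 0 ≤ -p.1 + H t x (-p.2)) ∧
      (∀ pt : ℝ, ∀ px : Euc N,
        ((pt, px, (0:ℝ)) : TXR N) ∈ regNormalTX (epiTX W) (t, x, (W t x).toReal) →
        ∀ ε > (0:ℝ), ∃ v : Euc N, Hstar H t x v ≠ ⊤ ∧ pt - ε ≤ (inner ℝ v (-px) : ℝ))) ∧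
    (∀ t ∈ C, ∀ x ∈ interior A, W t x ≠ ⊤ →
      (∀ p ∈ frSubdiff W t x, -p.1 + H t x (-p.2) = 0) ∧
      (∀ pt : ℝ, ∀ px : Euc N,
        ((pt, px, (0:ℝ)) : TXR N) ∈ regNormalTX (epiTX W) (t, x, (W t x).toReal) →
        IsLUB {r : ℝ | ∃ v : Euc N, Hstar H t x v ≠ ⊤ ∧ r = (inner ℝ v (-px) : ℝ)} pt))

/-- Local absolute continuity of a set-valued map `t ⇝ P(t)` with nonempty closed
values. -/
def LocAbsCont {F : Type*} [MetricSpace F] (P : ℝ → Set F) : Prop :=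
  (∀ t, 0 ≤ t → (P t).Nonempty ∧ IsClosed (P t)) ∧
  ∀ S T : ℝ, 0 ≤ S → S ≤ T → ∀ ε > (0:ℝ), ∀ K : Set F, IsCompact K →
    ∃ δ > (0:ℝ), ∀ m : ℕ, ∀ s t : ℕ → ℝ,
      (∀ i, i < m → S ≤ s i ∧ s i < t i ∧ t i ≤ T) →
      (∀ i, i + 1 < m → t i ≤ s (i + 1)) →
      (∑ i ∈ Finset.range m, (t i - s i)) < δ →
      ∃ e : ℕ → ℝ,
        (∀ i, i < m → 0 ≤ e i ∧
          (P (t i) ∩ K ⊆ {y | ∃ z ∈ P (s i), dist y z ≤ e i}) ∧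
          (P (s i) ∩ K ⊆ {y | ∃ z ∈ P (t i), dist y z ≤ e i})) ∧
        (∑ i ∈ Finset.range m, e i) < ε

/-! ### The class 𝓗 -/

/-- The rescaled Hamiltonian `IH(t,x,p) := θ(t)⁻¹ H(t,x,θ(t)p)`. -/
def IHam {N : ℕ} (H : ℝ → Euc N → Euc N → ℝ) (θ : ℝ → ℝ) :
    ℝ → Euc N → Euc N → ℝ :=
  fun t x p => (θ t)⁻¹ * H t x (θ t • p)

/-- The `L^∞([0,∞))` norm. -/
def supNormInfty (θ : ℝ → ℝ) : ℝ :=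
  (essSup (fun t => ENNReal.ofReal |θ t|) (volume.restrict (Ici (0:ℝ)))).toReal


/-- The class `𝓗(θ,λ,{ψ_r},φ,c,A)`. -/
def ClassH {N : ℕ} (H : ℝ → Euc N → Euc N → ℝ) (θ : ℝ → ℝ)
    (lam : ℝ → Euc N → ℝ) (ψ : ℝ → ℝ → ℝ) (φ c : ℝ → ℝ) (A : Set (Euc N)) : Prop :=
  (∀ t, 0 < θ t) ∧ Measurable θ ∧
  essSup (fun t => ENNReal.ofReal |θ t|) (volume.restrict (Ici (0:ℝ))) ≠ ⊤ ∧
  (∀ r, 0 < r → (∀ t, 0 ≤ ψ r t) ∧ IntegrableOn (ψ r) (Ici 0)) ∧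
  (∃ k q : ℝ → ℝ, HppH (IHam H θ) A lam φ c k q) ∧
  ∀ r, 0 < r → ∀ t₀, 0 ≤ t₀ → ∀ x₀ ∈ A, ‖x₀‖ ≤ r →
    ∀ p ∈ SH (IHam H θ) A t₀ x₀,
      ∀ᵐ t ∂(volume.restrict (Ici t₀)), θ t * lam t (p.1 t) ≤ ψ r t

/-- Lemma `rep-rde`. If `(U,f,l)` is a representation of the
real-valued convex function `h = H(t,x,·)` and `f(t,x,U(t))` is closed and convex,
then `dom H*(t,x,·) = f(t,x,U(t))`. -/
theorem stmt_0 {N M : ℕ} (h : Euc N → ℝ) (hconv : ConvexOn ℝ univ h)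
    (U : Set (Euc M)) (hU : U.Nonempty)
    (f : Euc M → Euc N) (l : Euc M → ℝ)
    (hcl : IsClosed (f '' U)) (hcv : Convex ℝ (f '' U))
    (hrep : ∀ p : Euc N,
      IsLUB {r : ℝ | ∃ u ∈ U, r = (inner ℝ p (f u) : ℝ) - l u} (h p)) :
    domConj h = f '' U := by
  ext v
  simp only [domConj, Set.mem_setOf_eq]
  constructor
  · intro hv
    by_contra hvU
    obtain ⟨φ, c, hc1, hc2⟩ := geometric_hahn_banach_closed_point hcv hcl hvU
    set p₀ := (InnerProductSpace.toDual ℝ (Euc N)).symm φ with hp₀def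
    have hip : ∀ y : Euc N, (inner ℝ p₀ y : ℝ) = φ y := fun y =>
      InnerProductSpace.toDual_symm_apply
    have hterm : ∀ p : Euc N, (((inner ℝ v p : ℝ) - h p : ℝ) : EReal) ≤ conj h v :=
      fun p => le_iSup (fun p : Euc N => (((inner ℝ v p : ℝ) - h p : ℝ) : EReal)) p
    have hne_bot : conj h v ≠ ⊥ := fun hb => by simpa [hb] using hterm 0
    set b := (conj h v).toReal with hbdef
    have hco : conj h v = (b : EReal) := (EReal.coe_toReal hv hne_bot).symm
    have hub : ∀ p : Euc N, (inner ℝ v p : ℝ) - h p ≤ b := by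
      intro p
      have := hterm p
      rw [hco] at this
      exact_mod_cast this
    have hd : 0 < (inner ℝ v p₀ : ℝ) - c := by
      rw [real_inner_comm, hip v]; linarith [hc2]
    set d := (inner ℝ v p₀ : ℝ) - c with hddef
    have hub2 : ∀ t : ℝ, 1 ≤ t → h (t • p₀) ≤ h p₀ + (t - 1) * c := by
      intro t ht
      refine (hrep (t • p₀)).2 ?_
      rintro r ⟨u, hu, rfl⟩
      have h1 : (inner ℝ p₀ (f u) : ℝ) - l u ≤ h p₀ := (hrep p₀).1 ⟨u, hu, rfl⟩
      have h2 : (inner ℝ p₀ (f u) : ℝ) ≤ c := by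
        rw [hip]; exact (hc1 _ ⟨u, hu, rfl⟩).le
      have h3 : (inner ℝ (t • p₀) (f u) : ℝ) = t * (inner ℝ p₀ (f u) : ℝ) :=
        real_inner_smul_left _ _ _
      rw [h3]
      nlinarith
    set t := max 1 ((b + h p₀ - c + 1) / d) with htdef
    have ht1 : (1 : ℝ) ≤ t := le_max_left _ _
    have ht2 : b + h p₀ - c + 1 ≤ t * d := by
      have : (b + h p₀ - c + 1) / d ≤ t := le_max_right _ _
      calc b + h p₀ - c + 1 = ((b + h p₀ - c + 1) / d) * d := by
            field_simp
        _ ≤ t * d := by nlinarith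
    have h5 : (inner ℝ v (t • p₀) : ℝ) = t * (inner ℝ v p₀ : ℝ) :=
      real_inner_smul_right _ _ _
    have h6 : b < (inner ℝ v (t • p₀) : ℝ) - h (t • p₀) := by
      have := hub2 t ht1
      rw [h5]
      nlinarith
    exact absurd (hub (t • p₀)) (not_le.2 h6)
  · rintro ⟨u, hu, rfl⟩
    have hle : conj h (f u) ≤ ((l u : ℝ) : EReal) := by
      refine iSup_le fun p => ?_
      have h1 : (inner ℝ p (f u) : ℝ) - l u ≤ h p := (hrep p).1 ⟨u, hu, rfl⟩
      have : (inner ℝ (f u) p : ℝ) - h p ≤ l u := by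
        rw [real_inner_comm]; linarith
      exact_mod_cast this
    exact ne_top_of_le_ne_top (EReal.coe_ne_top _) hle

end HJB
end
end

section
/- Fix t ∈ [0,∞) and x ∈ ℝ^N. Let H(t,x,·) : ℝ^N → ℝ be a real-valued convex function, let U(t) be a nonempty subset of ℝ^M, let f(t,x,·) : ℝ^M → ℝ^N be such that f(t,x,U(t)) is closed and convex, and let l(t,x,·) : ℝ^M → ℝ. If H(t,x,p) = sup_{u∈U(t)} (⟨p,f(t,x,u)⟩ − l(t,x,u)) for all p ∈ ℝ^N and the set Γ(t,x) := {(f(t,x,u), l(t,x,u)+r) : u ∈ U(t), r ≥ 0} is closed and convex, then epi H*(t,x,·) = Γ(t,x). -/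
open MeasureTheory Set Filter Topology

noncomputable section

namespace HJB

/-- Lemma `rep-epi`. If `(U,f,l)` is a representation of the
real-valued convex function `h = H(t,x,·)`, `f(t,x,U(t))` is closed and convex, and
`Γ = {(f(u), l(u)+r) : u ∈ U, r ≥ 0}` is closed and convex, then `epi H*(t,x,·) = Γ`. -/
theorem stmt_1 {N M : ℕ} (h : Euc N → ℝ) (hconv : ConvexOn ℝ univ h)
    (U : Set (Euc M)) (hU : U.Nonempty)
    (f : Euc M → Euc N) (l : Euc M → ℝ)
    (hcl : IsClosed (f '' U)) (hcv : Convex ℝ (f '' U))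
    (hrep : ∀ p : Euc N,
      IsLUB {r : ℝ | ∃ u ∈ U, r = (inner ℝ p (f u) : ℝ) - l u} (h p))
    (Γ : Set (Euc N × ℝ))
    (hΓ : Γ = {y : Euc N × ℝ | ∃ u ∈ U, ∃ r : ℝ, 0 ≤ r ∧ y = (f u, l u + r)})
    (hΓcl : IsClosed Γ) (hΓcv : Convex ℝ Γ) :
    epiConj h = Γ := by
  ext q
  obtain ⟨v, s⟩ := q
  constructor
  · -- hard direction
    intro hvs
    have key : ∀ p : Euc N, (inner ℝ v p : ℝ) - h p ≤ s := by
      intro p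
      have h1 : (((inner ℝ v p : ℝ) - h p : ℝ) : EReal) ≤ (s : EReal) :=
        le_trans (le_iSup (fun p : Euc N => (((inner ℝ v p : ℝ) - h p : ℝ) : EReal)) p) hvs
      exact_mod_cast h1
    by_contra hn
    obtain ⟨g, c, hgc, hgl⟩ := geometric_hahn_banach_point_closed hΓcv hΓcl hn
    set a : ℝ := g ((0 : Euc N), (1 : ℝ)) with ha
    set gx : Euc N →L[ℝ] ℝ := g.comp (ContinuousLinearMap.inl ℝ (Euc N) ℝ) with hgx
    have hsplit : ∀ (y : Euc N) (w : ℝ), g (y, w) = gx y + w * a := by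
      intro y w
      have hyw : ((y, w) : Euc N × ℝ)
          = ((y, 0) : Euc N × ℝ) + w • (((0 : Euc N), (1 : ℝ)) : Euc N × ℝ) := by
        simp [Prod.ext_iff]
      rw [hyw, map_add, ContinuousLinearMap.map_smul]
      simp [hgx, ha, smul_eq_mul]
    set p0 : Euc N := (InnerProductSpace.toDual ℝ (Euc N)).symm gx with hp0
    have hp0y : ∀ y : Euc N, (inner ℝ p0 y : ℝ) = gx y := fun y =>
      InnerProductSpace.toDual_symm_apply
    have hmem : ∀ u ∈ U, ∀ r : ℝ, 0 ≤ r → c < gx (f u) + (l u + r) * a := by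
      intro u hu r hr
      have := hgl (f u, l u + r) (by rw [hΓ]; exact ⟨u, hu, r, hr, rfl⟩)
      rwa [hsplit] at this
    have hvc : gx v + s * a < c := by rw [← hsplit]; exact hgc
    obtain ⟨u0, hu0⟩ := hU
    have hlb : ∀ u ∈ U, -l u ≤ h 0 := by
      intro u hu
      have h0 : (inner ℝ (0 : Euc N) (f u) : ℝ) - l u ≤ h 0 := (hrep 0).1 ⟨u, hu, rfl⟩
      rw [inner_zero_left] at h0
      linarith
    have hane : 0 ≤ a := by
      by_contra hneg
      push_neg at hneg
      set r : ℝ := max 0 ((c - gx (f u0)) / a - l u0) with hr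
      have hr0 : 0 ≤ r := le_max_left _ _
      have hrge : (c - gx (f u0)) / a - l u0 ≤ r := le_max_right _ _
      have h2 : (l u0 + r) * a ≤ c - gx (f u0) := by
        have hle : (c - gx (f u0)) / a ≤ l u0 + r := by linarith
        calc (l u0 + r) * a ≤ (c - gx (f u0)) / a * a :=
              (mul_le_mul_right_of_neg hneg).mpr hle
          _ = c - gx (f u0) := div_mul_cancel₀ _ (ne_of_lt hneg)
      have := hmem u0 hu0 r hr0
      linarith
    rcases lt_or_eq_of_le hane with hapos | hazero
    · -- a > 0
      set p : Euc N := (-(1 / a)) • p0 with hp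
      have hip : ∀ y : Euc N, (inner ℝ p y : ℝ) = -(1 / a) * gx y := by
        intro y
        rw [hp, real_inner_smul_left, hp0y]
      have hub : h p ≤ -c / a := by
        refine (hrep p).2 ?_
        rintro r ⟨u, hu, rfl⟩
        have h3 : c < gx (f u) + l u * a := by simpa using hmem u hu 0 le_rfl
        rw [hip]
        have h4 : (c - gx (f u)) / a < l u := by
          rw [div_lt_iff₀ hapos]; linarith
        have heq : -(1 / a) * gx (f u) - (c - gx (f u)) / a = -c / a := by
          field_simp; ring
        linarith
      have hk := key p
      rw [real_inner_comm, hip] at hk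
      rw [neg_div] at hub
      have hs2 : s < (c - gx v) / a := by
        rw [lt_div_iff₀ hapos]; linarith
      have heq2 : -(1 / a) * gx v + c / a = (c - gx v) / a := by
        field_simp; ring
      have : (c - gx v) / a ≤ s := by rw [← heq2]; linarith
      linarith
    · -- a = 0
      have hvc0 : gx v < c := by rw [← hazero] at hvc; linarith
      have hgcu : ∀ u ∈ U, c < gx (f u) := by
        intro u hu
        have := hmem u hu 0 le_rfl
        rw [← hazero] at this; linarith
      have hd : 0 < c - gx v := by linarith
      set t : ℝ := max 1 ((s + h 0 + 1) / (c - gx v)) with ht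
      have ht1 : 0 < t := lt_of_lt_of_le one_pos (le_max_left _ _)
      have ht2 : (s + h 0 + 1) / (c - gx v) ≤ t := le_max_right _ _
      set p : Euc N := (-t) • p0 with hp
      have hip : ∀ y : Euc N, (inner ℝ p y : ℝ) = -t * gx y := by
        intro y
        rw [hp, real_inner_smul_left, hp0y]
      have hub : h p ≤ -t * c + h 0 := by
        refine (hrep p).2 ?_
        rintro r ⟨u, hu, rfl⟩
        rw [hip]
        have h5 := hgcu u hu
        have h6 := hlb u hu
        nlinarith
      have hk := key p
      rw [real_inner_comm, hip] at hk
      have h9 : s + h 0 + 1 ≤ t * (c - gx v) := (div_le_iff₀ hd).mp ht2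
      have h10 : t * (c - gx v) = t * c - t * gx v := by ring
      linarith
  · -- easy direction
    intro hq
    rw [hΓ] at hq
    obtain ⟨u, hu, r, hr, heq⟩ := hq
    obtain ⟨hv, hs⟩ := Prod.ext_iff.mp heq
    simp only at hv hs
    subst hv; subst hs
    simp only [epiConj, mem_setOf_eq, conj]
    refine iSup_le fun p => ?_
    have h1 : (inner ℝ p (f u) : ℝ) - l u ≤ h p := (hrep p).1 ⟨u, hu, rfl⟩
    have h2 : (inner ℝ (f u) p : ℝ) - h p ≤ l u + r := by
      rw [real_inner_comm]; linarith
    exact_mod_cast h2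

end HJB
end
end

section
/- Let H : [0,∞)×ℝ^N×ℝ^N → ℝ be measurable in t, continuous in x and convex in p, and suppose |H(t,x,p)−H(t,y,p)| ≤ k(t)(1+|p|)|x−y| for all t ∈ [0,∞) and x,y,p ∈ ℝ^N, where k : [0,∞) → [0,∞). Set F(t,x) := dom H*(t,x,·) and E(t,x) := epi H*(t,x,·). Then for all t ∈ [0,∞) and x,y ∈ ℝ^N: dl_H(F(t,x),F(t,y)) ≤ k(t)|x−y| and dl_H(E(t,x),E(t,y)) ≤ 2k(t)|x−y|, where dl_H denotes the extended Hausdorff distance. -/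
open MeasureTheory Set Filter Topology

noncomputable section

namespace HJB

/-! ### Auxiliary lemmas for `stmt_3` -/

lemma conj_le_coe_iff {N : ℕ} (h : Euc N → ℝ) (v : Euc N) (r : ℝ) :
    conj h v ≤ (r : EReal) ↔ ∀ p, (inner ℝ v p : ℝ) - h p ≤ r := by
  unfold conj
  rw [iSup_le_iff]
  exact forall_congr' fun p => EReal.coe_le_coe_iff

lemma conj_ne_top_iff {N : ℕ} (h : Euc N → ℝ) (v : Euc N) :
    conj h v ≠ ⊤ ↔ ∃ c : ℝ, ∀ p, (inner ℝ v p : ℝ) - h p ≤ c := by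
  constructor
  · intro hne
    have hbot : conj h v ≠ ⊥ := by
      have hle : (((inner ℝ v (0 : Euc N) : ℝ) - h 0 : ℝ) : EReal) ≤ conj h v :=
        le_iSup (fun p : Euc N => (((inner ℝ v p : ℝ) - h p : ℝ) : EReal)) 0
      intro hb
      rw [hb] at hle
      exact ((EReal.bot_lt_coe _).not_ge hle)
    refine ⟨(conj h v).toReal, ?_⟩
    rw [← conj_le_coe_iff, EReal.coe_toReal hne hbot]
  · rintro ⟨c, hc⟩
    exact ne_top_of_le_ne_top (EReal.coe_ne_top c) ((conj_le_coe_iff h v c).mpr hc)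

/-- Sandwich theorem: an affine function between a concave minorant and a convex
function on a finite-dimensional space. -/
lemma sandwich {N : ℕ} (f g : Euc N → ℝ) (hf : ConvexOn ℝ univ f)
    (hg : ConcaveOn ℝ univ g) (hgf : ∀ p, g p ≤ f p) :
    ∃ (w : Euc N) (β : ℝ), (∀ p, g p ≤ (inner ℝ w p : ℝ) + β) ∧
      ∀ p, (inner ℝ w p : ℝ) + β ≤ f p := by
  have hfc : Continuous f := hf.locallyLipschitz.continuous
  set A : Set (Euc N × ℝ) := {z | f z.1 < z.2} with hA
  set B : Set (Euc N × ℝ) := {z | z.2 ≤ g z.1} with hB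
  have hAo : IsOpen A := isOpen_lt (hfc.comp continuous_fst) continuous_snd
  have hAc : Convex ℝ A := by
    have := hf.convex_strict_epigraph
    convert this using 1
    ext z; simp [hA]
  have hBc : Convex ℝ B := by
    have := hg.convex_hypograph
    convert this using 1
    ext z; simp [hB]
  have hdisj : Disjoint A B := by
    rw [Set.disjoint_left]
    intro z hzA hzB
    exact absurd (lt_of_lt_of_le hzA (hzB.trans (hgf z.1))) (lt_irrefl _)
  obtain ⟨L, u, hLA, hLB⟩ := geometric_hahn_banach_open hAc hAo hBc hdisj
  set a : ℝ := L ((0 : Euc N), (1 : ℝ)) with ha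
  have hdecomp : ∀ (p : Euc N) (r : ℝ), L (p, r) = L (p, 0) + a * r := by
    intro p r
    have hz : ((p, r) : Euc N × ℝ) = (p, 0) + r • ((0 : Euc N), (1 : ℝ)) := by
      simp [Prod.ext_iff]
    rw [hz, map_add, L.map_smul, smul_eq_mul, ha]
    ring
  have hkey1 : ∀ p, L (p, 0) + a * f p ≤ u := by
    intro p
    have h1 : ∀ δ : ℝ, 0 < δ → L (p, 0) + a * (f p + δ) < u := by
      intro δ hδ
      have hm : ((p, f p + δ) : Euc N × ℝ) ∈ A := by simp [hA]; linarith
      have := hLA _ hm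
      rwa [hdecomp] at this
    by_contra hlt
    push_neg at hlt
    rcases le_or_gt a 0 with hneg | hpos
    · rcases eq_or_lt_of_le hneg with heq | hneg'
      · have h1' := h1 1 one_pos
        rw [heq] at h1' hlt
        linarith
      · set δ := (L (p, 0) + a * f p - u) / (2 * (-a)) with hδdef
        have hδ : 0 < δ := by
          apply div_pos (by linarith) (by linarith)
        have := h1 δ hδ
        have hane : a ≠ 0 := ne_of_lt hneg'
        have haδ : a * δ = -((L (p, 0) + a * f p - u) / 2) := by
          rw [hδdef]
          field_simp
        nlinarith
    · have := h1 1 one_pos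
      nlinarith
  have hkey2 : ∀ p, u ≤ L (p, 0) + a * g p := by
    intro p
    have hm : ((p, g p) : Euc N × ℝ) ∈ B := by simp [hB]
    have := hLB _ hm
    rwa [hdecomp] at this
  have ha_neg : a < 0 := by
    rcases lt_trichotomy a 0 with h | h | h
    · exact h
    · exfalso
      have h1 := hkey1 0
      have h2 := hkey2 0
      have hm : ((0, f 0 + 1) : Euc N × ℝ) ∈ A := by simp [hA]
      have h3 := hLA _ hm
      rw [hdecomp] at h3
      rw [h] at h3 h2
      simp at h3 h2
      linarith
    · exfalso
      have h1 : ∀ δ : ℝ, 0 < δ → L (0, 0) + a * (f 0 + δ) < u := by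
        intro δ hδ
        have hm : (((0 : Euc N), f 0 + δ) : Euc N × ℝ) ∈ A := by simp [hA]; linarith
        have := hLA _ hm
        rwa [hdecomp] at this
      set δ := max 1 ((u - L (0, 0) - a * f 0) / a) with hδdef
      have hδ : 0 < δ := lt_of_lt_of_le one_pos (le_max_left _ _)
      have h2 := h1 δ hδ
      have h3 : (u - L (0, 0) - a * f 0) / a ≤ δ := le_max_right _ _
      have h4 : u - L (0, 0) - a * f 0 ≤ a * δ := by
        rw [div_le_iff₀ h] at h3
        linarith [h3]
      nlinarith
  -- represent L(·,0) by an inner product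
  set φ : Euc N →L[ℝ] ℝ := L.comp (ContinuousLinearMap.inl ℝ (Euc N) ℝ) with hφ
  have hφa : ∀ p, φ p = L (p, 0) := fun p => rfl
  set w₀ : Euc N := (InnerProductSpace.toDual ℝ (Euc N)).symm φ with hw₀
  have hw₀a : ∀ p : Euc N, (inner ℝ w₀ p : ℝ) = L (p, 0) := by
    intro p
    rw [hw₀, InnerProductSpace.toDual_symm_apply]
    rfl
  refine ⟨-(a⁻¹) • w₀, u * a⁻¹, ?_, ?_⟩
  · intro p
    have h2 := hkey2 p
    have hval : (inner ℝ (-(a⁻¹) • w₀) p : ℝ) = -(a⁻¹) * L (p, 0) := by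
      rw [real_inner_smul_left, hw₀a]
    rw [hval]
    -- g p ≤ -(a⁻¹) * L (p,0) + u * a⁻¹  ⟺  u ≤ L(p,0) + a * g p  (a < 0)
    have hane : a ≠ 0 := ne_of_lt ha_neg
    rw [← sub_nonneg]
    have hexp : -(a⁻¹) * L (p, 0) + u * a⁻¹ - g p
        = (L (p, 0) + a * g p - u) * (-(a⁻¹)) := by
      field_simp
      ring
    rw [hexp]
    apply mul_nonneg (by linarith) (neg_nonneg.mpr (inv_nonpos.mpr ha_neg.le))
  · intro p
    have h1 := hkey1 p
    have hval : (inner ℝ (-(a⁻¹) • w₀) p : ℝ) = -(a⁻¹) * L (p, 0) := by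
      rw [real_inner_smul_left, hw₀a]
    rw [hval]
    have hane : a ≠ 0 := ne_of_lt ha_neg
    rw [← sub_nonneg]
    have hexp : f p - (-(a⁻¹) * L (p, 0) + u * a⁻¹)
        = (u - (L (p, 0) + a * f p)) * (-(a⁻¹)) := by
      field_simp
      ring
    rw [hexp]
    apply mul_nonneg (by linarith) (neg_nonneg.mpr (inv_nonpos.mpr ha_neg.le))

/-- Key approximation lemma. -/
lemma key_approx {N : ℕ} (h₁ h₂ : Euc N → ℝ) (hc₂ : ConvexOn ℝ univ h₂) (ε c : ℝ)
    (hε : 0 ≤ ε) (hle : ∀ p, h₁ p ≤ h₂ p + ε * (1 + ‖p‖)) (v : Euc N)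
    (hv : ∀ p, (inner ℝ v p : ℝ) - h₁ p ≤ c) :
    ∃ w : Euc N, ‖v - w‖ ≤ ε ∧ ∀ p, (inner ℝ w p : ℝ) - h₂ p ≤ c + ε := by
  set g : Euc N → ℝ := fun p => (inner ℝ v p : ℝ) - ε * ‖p‖ - (c + ε) with hgdef
  have hg : ConcaveOn ℝ univ g := by
    refine ⟨convex_univ, ?_⟩
    intro p _ q _ s b hs hb hsb
    have hb' : b = 1 - s := by linarith
    subst hb'
    have h1 : (inner ℝ v (s • p + (1 - s) • q) : ℝ)
        = s * (inner ℝ v p : ℝ) + (1 - s) * (inner ℝ v q : ℝ) := by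
      rw [inner_add_right, real_inner_smul_right, real_inner_smul_right]
    have h2 : ‖s • p + (1 - s) • q‖ ≤ s * ‖p‖ + (1 - s) * ‖q‖ := by
      refine (norm_add_le _ _).trans ?_
      rw [norm_smul, norm_smul]
      simp [Real.norm_eq_abs, abs_of_nonneg hs, abs_of_nonneg hb]
    have h3 : ε * ‖s • p + (1 - s) • q‖ ≤ ε * (s * ‖p‖ + (1 - s) * ‖q‖) :=
      mul_le_mul_of_nonneg_left h2 hε
    simp only [hgdef, smul_eq_mul, h1]
    nlinarith [h3]
  have hgf : ∀ p, g p ≤ h₂ p := by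
    intro p
    have h1 := hv p
    have h2 := hle p
    simp only [hgdef]
    nlinarith [norm_nonneg p]
  obtain ⟨w, β, hg1, hg2⟩ := sandwich h₂ g hc₂ hg hgf
  have hβ : -(c + ε) ≤ β := by
    have := hg1 0
    simpa [hgdef] using this
  refine ⟨w, ?_, ?_⟩
  · have hlin : ∀ p, (inner ℝ (v - w) p : ℝ) ≤ ε * ‖p‖ + (β + c + ε) := by
      intro p
      have := hg1 p
      simp only [hgdef] at this
      rw [inner_sub_left]
      linarith
    have hscale : ∀ p, (inner ℝ (v - w) p : ℝ) ≤ ε * ‖p‖ := by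
      intro p
      by_contra hlt
      push_neg at hlt
      set d := (inner ℝ (v - w) p : ℝ) - ε * ‖p‖ with hd
      have hd0 : 0 < d := by rw [hd]; linarith
      set t : ℝ := max 1 ((β + c + ε) / d + 1) with ht
      have ht0 : 0 < t := lt_of_lt_of_le one_pos (le_max_left _ _)
      have ht1 : (β + c + ε) / d < t := lt_of_lt_of_le (by linarith) (le_max_right _ _)
      have := hlin (t • p)
      rw [real_inner_smul_right, norm_smul, Real.norm_eq_abs, abs_of_pos ht0] at this
      have h5 : t * d ≤ β + c + ε := by
        have : t * ((inner ℝ (v - w) p : ℝ) - ε * ‖p‖) ≤ β + c + ε := by nlinarith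
        simpa [hd] using this
      have h6 : (β + c + ε) / d < t := ht1
      rw [div_lt_iff₀ hd0] at h6
      linarith
    have h7 := hscale (v - w)
    rw [real_inner_self_eq_norm_sq] at h7
    rcases eq_or_lt_of_le (norm_nonneg (v - w)) with h8 | h8
    · rw [← h8]; exact hε
    · nlinarith
  · intro p
    have := hg2 p
    linarith

/-- Corollary `wrow-wm`, (M6)–(M7). If `H` is measurable in `t`,
continuous in `x`, convex in `p` and `k(t)(1+|p|)`-Lipschitz in `x`, then
`dl_H(F(t,x),F(t,y)) ≤ k(t)|x-y|` and `dl_H(E(t,x),E(t,y)) ≤ 2k(t)|x-y|`. -/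
theorem stmt_3 {N : ℕ} (H : ℝ → Euc N → Euc N → ℝ) (k : ℝ → ℝ)
    (hk : ∀ t, 0 ≤ k t)
    (hmeas : ∀ x p, Measurable fun t => H t x p)
    (hcont : ∀ t p, Continuous fun x => H t x p)
    (hconv : ∀ t x, ConvexOn ℝ univ (H t x))
    (hlip : ∀ t, 0 ≤ t → ∀ x y p : Euc N,
      |H t x p - H t y p| ≤ k t * (1 + ‖p‖) * ‖x - y‖) :
    ∀ t, 0 ≤ t → ∀ x y : Euc N,
      EMetric.hausdorffEdist (domConj (H t x)) (domConj (H t y))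
        ≤ ENNReal.ofReal (k t * ‖x - y‖) ∧
      EMetric.hausdorffEdist (epiConj (H t x)) (epiConj (H t y))
        ≤ ENNReal.ofReal (2 * k t * ‖x - y‖) := by
  intro t ht x y
  set ε := k t * ‖x - y‖ with hεdef
  have hε : 0 ≤ ε := mul_nonneg (hk t) (norm_nonneg _)
  have hle₁ : ∀ p, H t x p ≤ H t y p + ε * (1 + ‖p‖) := by
    intro p
    have := hlip t ht x y p
    have h1 := abs_le.mp this
    rw [hεdef]
    nlinarith [h1.2]
  have hle₂ : ∀ p, H t y p ≤ H t x p + ε * (1 + ‖p‖) := by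
    intro p
    have := hlip t ht x y p
    have h1 := abs_le.mp this
    rw [hεdef]
    nlinarith [h1.1]
  have domside : ∀ h₁ h₂ : Euc N → ℝ, ConvexOn ℝ univ h₂ →
      (∀ p, h₁ p ≤ h₂ p + ε * (1 + ‖p‖)) →
      ∀ v ∈ domConj h₁, ∃ w ∈ domConj h₂, edist v w ≤ ENNReal.ofReal ε := by
    intro h₁ h₂ hc hle v hv
    obtain ⟨c, hc'⟩ := (conj_ne_top_iff h₁ v).mp hv
    obtain ⟨w, hw1, hw2⟩ := key_approx h₁ h₂ hc ε c hε hle v hc'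
    refine ⟨w, (conj_ne_top_iff h₂ w).mpr ⟨c + ε, hw2⟩, ?_⟩
    rw [edist_le_ofReal hε, dist_eq_norm]
    exact hw1
  have episide : ∀ h₁ h₂ : Euc N → ℝ, ConvexOn ℝ univ h₂ →
      (∀ p, h₁ p ≤ h₂ p + ε * (1 + ‖p‖)) →
      ∀ q ∈ epiConj h₁, ∃ q' ∈ epiConj h₂, edist q q' ≤ ENNReal.ofReal (2 * ε) := by
    intro h₁ h₂ hc hle q hq
    obtain ⟨v, r⟩ := q
    have hvr : ∀ p, (inner ℝ v p : ℝ) - h₁ p ≤ r := (conj_le_coe_iff h₁ v r).mp hq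
    obtain ⟨w, hw1, hw2⟩ := key_approx h₁ h₂ hc ε r hε hle v hvr
    refine ⟨(w, r + ε), (conj_le_coe_iff h₂ w (r + ε)).mpr hw2, ?_⟩
    rw [Prod.edist_eq]
    apply max_le
    · rw [edist_le_ofReal (by linarith), dist_eq_norm]
      simpa using hw1.trans (by linarith)
    · rw [edist_le_ofReal (by linarith), Real.dist_eq]
      have h9 : ((v, r) : Euc N × ℝ).2 - ((w, r + ε) : Euc N × ℝ).2 = -ε := by simp
      rw [h9, abs_neg, abs_of_nonneg hε]
      linarith
  have hnorm : ‖y - x‖ = ‖x - y‖ := norm_sub_rev y x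
  constructor
  · exact EMetric.hausdorffEdist_le_of_mem_edist
      (domside _ _ (hconv t y) hle₁) (domside _ _ (hconv t x) hle₂)
  · have h2 : ENNReal.ofReal (2 * k t * ‖x - y‖) = ENNReal.ofReal (2 * ε) := by
      rw [hεdef]; ring_nf
    rw [h2]
    exact EMetric.hausdorffEdist_le_of_mem_edist
      (episide _ _ (hconv t y) hle₁) (episide _ _ (hconv t x) hle₂)

end HJB
end
end

section
/- Assume A ⊆ ℝ^N is nonempty and closed, U : [0,∞) ⇝ ℝ^M is measurable with nonempty closed images, H : [0,∞)×ℝ^N×ℝ^N → ℝ is measurable in t, continuous in x, convex in p, and H(t,x,0) ≤ −φ(t) for some φ ∈ L¹([0,∞);ℝ); and f, l are Lebesgue measurable in t, continuous in (x,u), with l(t,x,u) ≥ φ(t) for all t,x,u. If (U,f,l) is an epigraphical representation of H, then the value functions V and 𝒱 are well-defined and V(t₀,x₀) = 𝒱(t₀,x₀) for all (t₀,x₀) ∈ [0,∞)×A. Moreover, if x̄ is an optimal trajectory of V at (t₀,x₀) ∈ dom V, then there exists a measurable ū such that (x̄,ū) is an optimal pair of 𝒱 at (t₀,x₀); conversely,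 if (x̄,ū) is an optimal pair of 𝒱 at (t₀,x₀) ∈ dom 𝒱, then x̄ is an optimal trajectory of V at (t₀,x₀). -/
open MeasureTheory Set Filter Topology

noncomputable section

namespace HJB

set_option maxHeartbeats 1000000

/-! ### Auxiliary lemmas for Statement 8 -/

section Aux

lemma coe_neg_le_conj {N : ℕ} (h : Euc N → ℝ) (v : Euc N) :
    ((-h 0 : ℝ) : EReal) ≤ conj h v := by
  have := le_iSup (fun p : Euc N => (((inner ℝ v p : ℝ) - h p : ℝ) : EReal)) 0
  simpa [conj] using this

lemma conj_ne_bot {N : ℕ} (h : Euc N → ℝ) (v : Euc N) : conj h v ≠ ⊥ := by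
  intro hb
  have := coe_neg_le_conj h v
  rw [hb, le_bot_iff] at this
  exact (EReal.coe_ne_bot _) this

lemma conj_eq_iSup_dense {N : ℕ} (h : Euc N → ℝ) (hc : Continuous h)
    (d : ℕ → Euc N) (hd : DenseRange d) (v : Euc N) :
    conj h v = ⨆ k : ℕ, (((inner ℝ v (d k) : ℝ) - h (d k) : ℝ) : EReal) := by
  apply le_antisymm
  · apply iSup_le
    intro p
    obtain ⟨φ, hφ⟩ : ∃ φ : ℕ → ℕ, Tendsto (fun k => d (φ k)) atTop (𝓝 p) := by
      have : p ∈ closure (range d) := by rw [hd.closure_range]; trivial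
      obtain ⟨u, hu, hlim⟩ := mem_closure_iff_seq_limit.1 this
      choose φ hφ using hu
      exact ⟨φ, by simpa [← funext hφ] using hlim⟩
    have hcont : Tendsto (fun k => ((((inner ℝ v (d (φ k)) : ℝ) - h (d (φ k)) : ℝ)) : EReal))
        atTop (𝓝 (((inner ℝ v p : ℝ) - h p : ℝ) : EReal)) := by
      apply (continuous_coe_real_ereal.tendsto _).comp
      exact ((continuous_inner.comp (Continuous.prodMk_right v)).sub hc).continuousAt.tendsto.comp hφ
    refine le_of_tendsto hcont (Eventually.of_forall fun k => ?_)
    exact le_iSup (fun k : ℕ => (((inner ℝ v (d k) : ℝ) - h (d k) : ℝ) : EReal)) (φ k)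
  · exact iSup_le fun k => le_iSup (fun p : Euc N => (((inner ℝ v p : ℝ) - h p : ℝ) : EReal)) (d k)

lemma convexOn_continuous {N : ℕ} (h : Euc N → ℝ) (hc : ConvexOn ℝ univ h) :
    Continuous h := by
  rw [← continuousOn_univ]
  exact hc.continuousOn isOpen_univ

lemma aemeasurable_hstar {N : ℕ} (H : ℝ → Euc N → Euc N → ℝ)
    (hHmeas : ∀ x p, Measurable fun t => H t x p)
    (hHcont : ∀ t p, Continuous fun x => H t x p)
    (hHconv : ∀ t x, ConvexOn ℝ univ (H t x))
    {μ : Measure ℝ} {x v : ℝ → Euc N}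
    (hx : AEMeasurable x μ) (hv : AEMeasurable v μ) :
    AEMeasurable (fun t => Hstar H t (x t) (v t)) μ := by
  obtain ⟨d, hd⟩ := TopologicalSpace.exists_dense_seq (Euc N)
  have key : ∀ t, Hstar H t (x t) (v t)
      = ⨆ k : ℕ, (((inner ℝ (v t) (d k) : ℝ) - H t (x t) (d k) : ℝ) : EReal) := by
    intro t
    exact conj_eq_iSup_dense _ (convexOn_continuous _ (hHconv t (x t))) d hd (v t)
  simp_rw [key]
  apply AEMeasurable.iSup
  intro k
  apply AEMeasurable.coe_real_ereal
  apply AEMeasurable.sub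
  · exact ((continuous_inner.comp
      (continuous_id.prodMk continuous_const)).measurable).comp_aemeasurable hv
  · have hjoint : Measurable (Function.uncurry fun y t => H t y (d k)) :=
      measurable_uncurry_of_continuous_of_measurable
        (fun t => hHcont t (d k)) (fun y => hHmeas y (d k))
    exact hjoint.comp_aemeasurable (hx.prodMk aemeasurable_id)

lemma coord_continuous {M : ℕ} (j : Fin M) : Continuous fun u : Euc M => u j := by
  simpa using (EuclideanSpace.proj (𝕜 := ℝ) j).continuous

end Aux

section Sel

lemma exists_coord_min {M : ℕ} (G : ℝ → Euc M → ℝ)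
    (hGm : ∀ u, Measurable fun t => G t u) (hGc : ∀ t, Continuous (G t))
    (hG0 : ∀ t u, 0 ≤ G t u) (K : Set (Euc M)) (hK : IsCompact K) (j : Fin M) :
    ∃ c : ℝ → ℝ, Measurable c ∧
      ∀ t, ({u ∈ K | G t u = 0}).Nonempty → ∃ u ∈ K, G t u = 0 ∧ u j = c t := by
  rcases K.eq_empty_or_nonempty with rfl | hKne
  · exact ⟨0, measurable_const, fun t ht => by simp at ht⟩
  haveI : Nonempty K := hKne.to_subtype
  obtain ⟨d, hd⟩ := TopologicalSpace.exists_dense_seq K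
  obtain ⟨C, hC⟩ : ∃ C, ∀ u ∈ K, ‖u j‖ ≤ C :=
    hK.exists_bound_of_continuousOn (coord_continuous j).continuousOn
  have hCd : ∀ i : ℕ, -C ≤ (d i : Euc M) j := by
    intro i
    have := hC _ (d i).2; rw [Real.norm_eq_abs, abs_le] at this; exact this.1
  set e : ℕ → ℕ → ℝ → ℝ := fun n i t => (d i : Euc M) j + n * G t (d i) with he
  refine ⟨fun t => ⨆ n : ℕ, ⨅ i : ℕ, e n i t, ?_, ?_⟩
  · exact Measurable.iSup fun n => Measurable.iInf fun i =>
      measurable_const.add ((hGm _).const_mul _)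
  intro t hSne
  set c := ⨆ n : ℕ, ⨅ i : ℕ, e n i t with hc
  have hSeq : {u ∈ K | G t u = 0} = K ∩ (G t) ⁻¹' {0} := by ext u; simp [and_comm]
  have hScomp : IsCompact {u ∈ K | G t u = 0} := by
    rw [hSeq]; exact hK.inter_right (isClosed_singleton.preimage (hGc t))
  obtain ⟨ustar, hustar, hmin⟩ :=
    hScomp.exists_isMinOn hSne (coord_continuous j).continuousOn
  have hustarK : ustar ∈ K := hustar.1
  have hustar0 : G t ustar = 0 := hustar.2
  have hebdd : ∀ n, BddBelow (range fun i => e n i t) := by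
    intro n
    refine ⟨-C, ?_⟩
    rintro - ⟨i, rfl⟩
    have h2 : 0 ≤ (n : ℝ) * G t (d i) := mul_nonneg (Nat.cast_nonneg n) (hG0 t _)
    have := hCd i
    simp only [he]; linarith
  set f : ℕ → ℝ := fun n => ⨅ i : ℕ, e n i t with hf
  have hfle : ∀ n, f n ≤ ustar j := by
    intro n
    obtain ⟨w, hw, hwlim⟩ := mem_closure_iff_seq_limit.1
      (by rw [hd.closure_range]; trivial : (⟨ustar, hustarK⟩ : K) ∈ closure (range d))
    choose φ hφ using hw
    have hwlim' : Tendsto (fun k => ((d (φ k) : K) : Euc M)) atTop (𝓝 ustar) := by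
      have := (continuous_subtype_val.tendsto _).comp hwlim
      simpa [← funext hφ, Function.comp_def] using this
    have hval : Tendsto (fun k => e n (φ k) t) atTop (𝓝 (ustar j)) := by
      have h1 : Tendsto (fun k => ((d (φ k) : K) : Euc M) j) atTop (𝓝 (ustar j)) :=
        ((coord_continuous j).tendsto _).comp hwlim'
      have h2 : Tendsto (fun k => (n : ℝ) * G t (d (φ k))) atTop (𝓝 0) := by
        have := ((hGc t).tendsto _).comp hwlim'
        rw [hustar0] at this
        simpa using (this.const_mul (n : ℝ))
      simpa [he] using h1.add h2
    exact ge_of_tendsto hval (Eventually.of_forall fun k => ciInf_le (hebdd n) (φ k))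
  have hbddf : BddAbove (range f) := ⟨ustar j, by rintro - ⟨n, rfl⟩; exact hfle n⟩
  have hcle : c ≤ ustar j := ciSup_le hfle
  have hlec : ∀ n, f n ≤ c := fun n => le_ciSup hbddf n
  have hsel : ∀ n : ℕ, ∃ i, e n i t < c + 1 / (n + 1) := by
    intro n
    apply exists_lt_of_ciInf_lt
    calc (⨅ i : ℕ, e n i t) = f n := rfl
      _ ≤ c := hlec n
      _ < c + 1 / (n + 1) := lt_add_of_pos_right c (by positivity)
  choose i hi using hsel
  set w : ℕ → Euc M := fun n => (d (i n) : Euc M) with hw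
  have hwK : ∀ n, w n ∈ K := fun n => (d (i n)).2
  obtain ⟨u, huK, φ, hφmono, hφlim⟩ := hK.tendsto_subseq hwK
  set B := c + 1 + C with hB
  have hwj : ∀ n : ℕ, w n j ≤ c + 1 / (n + 1) := by
    intro n
    have h1 : w n j + n * G t (w n) < c + 1 / (n + 1) := hi n
    have h2 : 0 ≤ (n : ℝ) * G t (w n) := mul_nonneg (Nat.cast_nonneg n) (hG0 t _)
    linarith
  have hGw : ∀ n : ℕ, 1 ≤ n → G t (w n) ≤ B / n := by
    intro n hn
    have h1 : w n j + n * G t (w n) < c + 1 / (n + 1) := hi n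
    have h2 : -C ≤ w n j := hCd (i n)
    have h4 : (1 : ℝ) / (n + 1) ≤ 1 := by
      rw [div_le_one (by positivity)]
      have : (1:ℝ) ≤ n := by exact_mod_cast hn
      linarith
    have h3 : (n : ℝ) * G t (w n) ≤ B := by rw [hB]; linarith
    rw [le_div_iff₀ (by exact_mod_cast hn : (0:ℝ) < n)]
    linarith
  -- G t u = 0
  have hφge : ∀ k, k ≤ φ k := fun k => hφmono.le_apply
  have hGu : G t u = 0 := by
    have hlim1 : Tendsto (fun k => G t (w (φ k))) atTop (𝓝 (G t u)) :=
      ((hGc t).tendsto _).comp hφlim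
    have hlim2 : Tendsto (fun k => G t (w (φ k))) atTop (𝓝 0) := by
      apply squeeze_zero' (Eventually.of_forall fun k => hG0 t _)
        (g := fun k => B / (φ k : ℝ))
      · filter_upwards [eventually_ge_atTop 1] with k hk
        exact hGw (φ k) (le_trans hk (hφge k))
      · exact (tendsto_const_div_atTop_nhds_zero_nat B).comp
          (tendsto_atTop_atTop_of_monotone hφmono.monotone
            (fun b => ⟨b, hφge b⟩))
    exact tendsto_nhds_unique hlim1 hlim2
  -- u j ≤ c
  have huj : u j ≤ c := by
    have hlim1 : Tendsto (fun k => w (φ k) j) atTop (𝓝 (u j)) :=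
      ((coord_continuous j).tendsto _).comp hφlim
    have hlim2 : Tendsto (fun k => c + 1 / ((φ k : ℝ) + 1)) atTop (𝓝 (c + 0)) := by
      apply tendsto_const_nhds.add
      apply Tendsto.comp (f := fun k => (φ k : ℝ) + 1) tendsto_inv_atTop_zero ?_ |>.congr
        (fun k => (one_div _).symm)
      exact tendsto_atTop_add_const_right _ 1 <|
        tendsto_natCast_atTop_atTop.comp (tendsto_atTop_atTop_of_monotone hφmono.monotone
          (fun b => ⟨b, hφge b⟩))
    rw [add_zero] at hlim2
    exact le_of_tendsto_of_tendsto' hlim1 hlim2 fun k => hwj (φ k)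
  have hjc : u j = c := le_antisymm huj (le_trans hcle (hmin ⟨huK, hGu⟩))
  exact ⟨u, huK, hGu, hjc⟩
lemma exists_selection_compact {M : ℕ} (G : ℝ → Euc M → ℝ)
    (hGm : ∀ u, Measurable fun t => G t u) (hGc : ∀ t, Continuous (G t))
    (hG0 : ∀ t u, 0 ≤ G t u) (K : Set (Euc M)) (hK : IsCompact K) :
    ∃ sel : ℝ → Euc M, Measurable sel ∧
      ∀ t, ({u ∈ K | G t u = 0}).Nonempty → sel t ∈ K ∧ G t (sel t) = 0 := by
  have aux : ∀ n : ℕ, ∃ c : ℝ → (Fin M → ℝ), Measurable c ∧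
      ∀ t, ({u ∈ K | G t u = 0}).Nonempty →
        ∃ u ∈ K, G t u = 0 ∧ ∀ j : Fin M, (j : ℕ) < n → u j = c t j := by
    intro n
    induction n with
    | zero =>
      refine ⟨fun _ _ => 0, measurable_const, fun t ht => ?_⟩
      obtain ⟨u, hu⟩ := ht
      exact ⟨u, hu.1, hu.2, fun j hj => by omega⟩
    | succ n ih =>
      obtain ⟨c, hcm, hc⟩ := ih
      by_cases hn : M ≤ n
      · exact ⟨c, hcm, fun t ht => by
          obtain ⟨u, huK, hu0, hu⟩ := hc t ht
          exact ⟨u, huK, hu0, fun j _ => hu j (lt_of_lt_of_le j.isLt hn)⟩⟩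
      push_neg at hn
      set G' : ℝ → Euc M → ℝ := fun t u =>
        G t u + ∑ j : Fin M, if (j : ℕ) < n then |u j - c t j| else 0 with hG'
      have hG'm : ∀ u, Measurable fun t => G' t u := by
        intro u
        apply (hGm u).add
        apply Finset.measurable_sum
        intro j _
        split_ifs
        · exact (measurable_const.sub ((measurable_pi_apply j).comp hcm)).abs
        · exact measurable_const
      have hG'c : ∀ t, Continuous (G' t) := by
        intro t
        apply (hGc t).add
        apply continuous_finset_sum
        intro j _
        split_ifs
        · exact ((coord_continuous j).sub continuous_const).abs
        · exact continuous_const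
      have hG'0 : ∀ t u, 0 ≤ G' t u := by
        intro t u
        have : (0:ℝ) ≤ ∑ j : Fin M, if (j : ℕ) < n then |u j - c t j| else 0 :=
          Finset.sum_nonneg fun j _ => by split_ifs <;> simp [abs_nonneg]
        have := hG0 t u
        simp only [hG']; linarith
      obtain ⟨cn, hcnm, hcn⟩ := exists_coord_min G' hG'm hG'c hG'0 K hK ⟨n, hn⟩
      refine ⟨fun t j => if (j : ℕ) < n then c t j else if (j : ℕ) = n then cn t else 0,
        ?_, ?_⟩
      · apply measurable_pi_lambda
        intro j
        split_ifs
        · exact (measurable_pi_apply j).comp hcm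
        · exact hcnm
        · exact measurable_const
      intro t ht
      have hne' : ({u ∈ K | G' t u = 0}).Nonempty := by
        obtain ⟨u, huK, hu0, hu⟩ := hc t ht
        refine ⟨u, huK, ?_⟩
        have : (∑ j : Fin M, if (j : ℕ) < n then |u j - c t j| else 0) = 0 :=
          Finset.sum_eq_zero fun j _ => by
            split_ifs with h
            · simp [hu j h]
            · rfl
        simp [hG', hu0, this]
      obtain ⟨w, hwK, hw0, hwj⟩ := hcn t hne'
      have hsum0 : (∑ j : Fin M, if (j : ℕ) < n then |w j - c t j| else 0) = 0 ∧
          G t w = 0 := by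
        have h1 : (0:ℝ) ≤ ∑ j : Fin M, if (j : ℕ) < n then |w j - c t j| else 0 :=
          Finset.sum_nonneg fun j _ => by split_ifs <;> simp [abs_nonneg]
        have h2 := hG0 t w
        have h3 : G t w + (∑ j : Fin M, if (j : ℕ) < n then |w j - c t j| else 0) = 0 := hw0
        constructor <;> linarith
      have hcoords : ∀ j : Fin M, (j : ℕ) < n → w j = c t j := by
        intro j hj
        have := (Finset.sum_eq_zero_iff_of_nonneg
          (fun (j : Fin M) (_ : j ∈ Finset.univ) => by
            split_ifs <;> simp [abs_nonneg])).1
          hsum0.1 j (Finset.mem_univ j)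
        rw [if_pos hj] at this
        have := abs_eq_zero.1 this
        linarith
      refine ⟨w, hwK, hsum0.2, fun j hj => ?_⟩
      rcases Nat.lt_or_ge (j : ℕ) n with h | h
      · simp [h, hcoords j h]
      · have hjn : (j : ℕ) = n := by omega
        have hjeq : j = (⟨n, hn⟩ : Fin M) := Fin.ext hjn
        show w j = if (j : ℕ) < n then c t j else if (j : ℕ) = n then cn t else 0
        subst hjeq
        simp [hwj]
  obtain ⟨c, hcm, hc⟩ := aux M
  refine ⟨fun t => (EuclideanSpace.equiv (Fin M) ℝ).symm (c t), ?_, ?_⟩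
  · exact (EuclideanSpace.equiv (Fin M) ℝ).symm.continuous.measurable.comp hcm
  intro t ht
  obtain ⟨u, huK, hu0, hu⟩ := hc t ht
  have : u = (EuclideanSpace.equiv (Fin M) ℝ).symm (c t) := by
    apply (EuclideanSpace.equiv (Fin M) ℝ).injective
    funext j
    simpa using hu j j.isLt
  show (EuclideanSpace.equiv (Fin M) ℝ).symm (c t) ∈ K ∧
      G t ((EuclideanSpace.equiv (Fin M) ℝ).symm (c t)) = 0
  rw [← this]
  exact ⟨huK, hu0⟩

lemma exists_selection_global {M : ℕ} (G : ℝ → Euc M → ℝ)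
    (hGm : ∀ u, Measurable fun t => G t u) (hGc : ∀ t, Continuous (G t))
    (hG0 : ∀ t u, 0 ≤ G t u) :
    ∃ (T : Set ℝ) (sel : ℝ → Euc M), MeasurableSet T ∧ Measurable sel ∧
      (∀ t, (∃ u, G t u = 0) → t ∈ T) ∧ ∀ t ∈ T, G t (sel t) = 0 := by
  classical
  have hjoint : Measurable fun q : Euc M × ℝ => G q.2 q.1 :=
    measurable_uncurry_of_continuous_of_measurable (u := fun u t => G t u)
      (fun t => hGc t) (fun u => hGm u)
  choose selm hselm hsel using fun m : ℕ =>
    exists_selection_compact G hGm hGc hG0 (Metric.closedBall 0 m)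
      (isCompact_closedBall _ _)
  set T : ℕ → Set ℝ := fun m =>
    {t | selm m t ∈ Metric.closedBall (0 : Euc M) m ∧ G t (selm m t) = 0} with hT
  have hTmeas : ∀ m, MeasurableSet (T m) := by
    intro m
    apply MeasurableSet.inter
    · exact (hselm m) Metric.isClosed_closedBall.measurableSet
    · exact (hjoint.comp ((hselm m).prodMk measurable_id)) (measurableSet_singleton 0)
  have hTiff : ∀ m t, t ∈ T m ↔
      ({u ∈ Metric.closedBall (0 : Euc M) m | G t u = 0}).Nonempty := by
    intro m t
    constructor
    · rintro ⟨h1, h2⟩; exact ⟨selm m t, h1, h2⟩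
    · intro h; exact (hsel m t h)
  set Tall : Set ℝ := ⋃ m, T m with hTall
  set p : ℕ → ℝ → Prop := fun n t => t ∈ T n ∨ (n = 0 ∧ t ∉ Tall) with hp
  have hpmeas : ∀ n, MeasurableSet {t | p n t} := by
    intro n
    have : {t | p n t} = T n ∪ (if n = 0 then Tallᶜ else ∅) := by
      ext t; by_cases hn : n = 0 <;> simp [hp, hn]
    rw [this]
    apply (hTmeas n).union
    split_ifs
    · exact (MeasurableSet.iUnion hTmeas).compl
    · exact MeasurableSet.empty
  have hex : ∀ t, ∃ n, p n t := by
    intro t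
    by_cases h : t ∈ Tall
    · obtain ⟨m, hm⟩ := mem_iUnion.1 h
      exact ⟨m, Or.inl hm⟩
    · exact ⟨0, Or.inr ⟨rfl, h⟩⟩
  refine ⟨Tall, fun t => selm (Nat.find (hex t)) t, MeasurableSet.iUnion hTmeas,
    Measurable.find (fun n => hselm n) hpmeas hex, ?_, ?_⟩
  · intro t ⟨u, hu⟩
    obtain ⟨m, hm⟩ := exists_nat_ge ‖u‖
    apply mem_iUnion.2 ⟨m, _⟩
    exact (hTiff m t).2 ⟨u, mem_closedBall_zero_iff.2 hm, hu⟩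
  · intro t ht
    rcases Nat.find_spec (hex t) with h | ⟨_, h⟩
    · exact h.2
    · exact absurd ht h
lemma measurable_infDistU {M : ℕ} (U : ℝ → Set (Euc M))
    (hUmeas : ∀ O : Set (Euc M), IsOpen O → MeasurableSet {t : ℝ | (U t ∩ O).Nonempty})
    (hUne : ∀ t, (U t).Nonempty ∧ IsClosed (U t)) (u : Euc M) :
    Measurable fun t => Metric.infDist u (U t) := by
  apply measurable_of_Iio
  intro a
  have : (fun t => Metric.infDist u (U t)) ⁻¹' Iio a
      = {t | (U t ∩ Metric.ball u a).Nonempty} := by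
    ext t
    simp only [mem_preimage, mem_Iio, mem_setOf_eq]
    rw [Metric.infDist_lt_iff (hUne t).1]
    constructor
    · rintro ⟨y, hy, hd⟩; exact ⟨y, hy, by simpa [Metric.mem_ball, dist_comm] using hd⟩
    · rintro ⟨y, hy, hd⟩; exact ⟨y, hy, by simpa [Metric.mem_ball, dist_comm] using hd⟩
  rw [this]
  exact hUmeas _ Metric.isOpen_ball

lemma continuousOn_of_traj {N : ℕ} {x dx : ℝ → Euc N} {t₀ : ℝ}
    (h : IsTrajOn x dx t₀) : ContinuousOn x (Ici t₀) := by
  intro t ht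
  have hIcc : ContinuousOn x (Icc t₀ (t + 1)) := by
    have hprim : ContinuousOn (fun s => ∫ τ in Ioc t₀ s, dx τ) (Icc t₀ (t + 1)) :=
      intervalIntegral.continuousOn_primitive (h.1 (t + 1))
    have : ContinuousOn (fun s => x t₀ + ∫ τ in Ioc t₀ s, dx τ) (Icc t₀ (t + 1)) :=
      continuousOn_const.add hprim
    apply this.congr
    intro s hs
    rw [h.2 s hs.1, intervalIntegral.integral_of_le hs.1]
  have hmem : Icc t₀ (t + 1) ∈ 𝓝[Ici t₀] t := by
    apply Filter.mem_of_superset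
      (inter_mem (mem_nhdsWithin_of_mem_nhds (Iio_mem_nhds (lt_add_one t)))
        self_mem_nhdsWithin)
    rintro s ⟨hs1, hs2⟩
    exact ⟨hs2, le_of_lt hs1⟩
  exact (hIcc t ⟨ht, by linarith [mem_Ici.1 ht]⟩).mono_of_mem_nhdsWithin hmem

lemma aemeasurable_deriv_of_traj {N : ℕ} {x dx : ℝ → Euc N} {t₀ : ℝ}
    (h : IsTrajOn x dx t₀) : AEMeasurable dx (volume.restrict (Ici t₀)) := by
  have hU : Ici t₀ = ⋃ n : ℕ, Icc t₀ (t₀ + n) := by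
    ext s
    simp only [mem_Ici, mem_iUnion, mem_Icc]
    constructor
    · intro hs
      obtain ⟨n, hn⟩ := exists_nat_ge (s - t₀)
      exact ⟨n, hs, by linarith⟩
    · rintro ⟨n, hn, _⟩; exact hn
  rw [hU, aemeasurable_iUnion_iff]
  exact fun n => ((h.1 (t₀ + n)).aemeasurable)

lemma toReal_bounds {a : EReal} {b c : ℝ} (h1 : (b : EReal) ≤ a) (h2 : a ≤ (c : EReal)) :
    b ≤ a.toReal ∧ a.toReal ≤ c := by
  have hne1 : a ≠ ⊤ := ne_top_of_le_ne_top (EReal.coe_ne_top c) h2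
  have hne2 : a ≠ ⊥ := ne_bot_of_le_ne_bot (EReal.coe_ne_bot b) h1
  rw [← EReal.coe_toReal hne1 hne2] at h1 h2
  exact ⟨EReal.coe_le_coe_iff.1 h1, EReal.coe_le_coe_iff.1 h2⟩


end Sel

section Bridge

variable {N M : ℕ}

/-- From a control pair to a trajectory with no larger cost. -/
lemma traj_of_ctrl (U : ℝ → Set (Euc M)) (f : ℝ → Euc N → Euc M → Euc N)
    (l : ℝ → Euc N → Euc M → ℝ) (A : Set (Euc N)) (H : ℝ → Euc N → Euc N → ℝ)
    (φ : ℝ → ℝ)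
    (hHmeas : ∀ x p, Measurable fun t => H t x p)
    (hHcont : ∀ t p, Continuous fun x => H t x p)
    (hHconv : ∀ t x, ConvexOn ℝ univ (H t x))
    (hφ : MemL1 φ) (hH2 : ∀ t, 0 ≤ t → ∀ x, H t x 0 ≤ -φ t)
    (hepi2 : ∀ t x, flimg U f l t x ⊆ epiConj (H t x))
    {t₀ : ℝ} (ht₀ : 0 ≤ t₀) {x₀ : Euc N}
    (z : (ℝ → Euc N) × (ℝ → Euc M)) (hz : z ∈ Sf U f A t₀ x₀) :
    (z.1, fun s => f s (z.1 s) (z.2 s)) ∈ SH H A t₀ x₀ ∧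
      trajCost H t₀ (z.1, fun s => f s (z.1 s) (z.2 s)) ≤ ctrlCost l t₀ z := by
  obtain ⟨humeas, huU, hfint, hx0, hxA, hxeq⟩ := hz
  set dx : ℝ → Euc N := fun s => f s (z.1 s) (z.2 s) with hdx
  have htraj : IsTrajOn z.1 dx t₀ := ⟨hfint, fun t ht => by rw [hxeq t ht, hx0]⟩
  set μ := volume.restrict (Ici t₀) with hμ
  have haeIci : ∀ᵐ t ∂μ, t ∈ Ici t₀ := ae_restrict_mem measurableSet_Ici
  have hkey : ∀ᵐ t ∂μ, ((φ t : ℝ) : EReal) ≤ Hstar H t (z.1 t) (dx t) ∧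
      Hstar H t (z.1 t) (dx t) ≤ ((l t (z.1 t) (z.2 t) : ℝ) : EReal) := by
    filter_upwards [haeIci, huU] with t ht hU
    constructor
    · refine le_trans ?_ (coe_neg_le_conj (H t (z.1 t)) (dx t))
      exact EReal.coe_le_coe_iff.2 (by linarith [hH2 t (le_trans ht₀ ht) (z.1 t)])
    · have hmem : (f t (z.1 t) (z.2 t), l t (z.1 t) (z.2 t)) ∈ flimg U f l t (z.1 t) :=
        ⟨z.2 t, hU, rfl⟩
      have h2 := hepi2 t (z.1 t) hmem
      simp only [epiConj, mem_setOf_eq] at h2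
      simpa only [Hstar, hdx] using h2
  have hne_top : ∀ᵐ t ∂μ, Hstar H t (z.1 t) (dx t) ≠ ⊤ := by
    filter_upwards [hkey] with t ht
    exact ne_top_of_le_ne_top (EReal.coe_ne_top _) ht.2
  have hSH : (z.1, dx) ∈ SH H A t₀ x₀ := ⟨htraj, hx0, hxA, hne_top⟩
  refine ⟨hSH, ?_⟩
  by_cases hcost : IntegrableOn (fun t => l t (z.1 t) (z.2 t)) (Ici t₀)
  · have hxm : AEMeasurable z.1 μ :=
      (continuousOn_of_traj htraj).aemeasurable measurableSet_Ici
    have hdxm : AEMeasurable dx μ := aemeasurable_deriv_of_traj htraj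
    have hHm : AEMeasurable (fun t => Hstar H t (z.1 t) (dx t)) μ :=
      aemeasurable_hstar H hHmeas hHcont hHconv hxm hdxm
    set gre : ℝ → ℝ := fun t => (Hstar H t (z.1 t) (dx t)).toReal with hgre
    have hb : ∀ᵐ t ∂μ, φ t ≤ gre t ∧ gre t ≤ l t (z.1 t) (z.2 t) := by
      filter_upwards [hkey] with t ht
      exact toReal_bounds ht.1 ht.2
    have hgint : IntegrableOn gre (Ici t₀) := by
      apply Integrable.mono' ((hφ.mono_set (Ici_subset_Ici.2 ht₀)).abs.add hcost.abs)
        hHm.ereal_toReal.aestronglyMeasurable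
      filter_upwards [hb] with t ht
      simp only [Pi.add_apply, Pi.abs_apply]
      rw [Real.norm_eq_abs, abs_le]
      constructor
      · have h1 := neg_abs_le (φ t)
        have h2 := abs_nonneg (l t (z.1 t) (z.2 t))
        linarith [ht.1]
      · have h1 := le_abs_self (l t (z.1 t) (z.2 t))
        have h2 := abs_nonneg (φ t)
        linarith [ht.2]
    have e1 : trajCost H t₀ (z.1, dx) = (((∫ t in Ici t₀, gre t) : ℝ) : EReal) := by
      rw [trajCost, if_pos]
      exact ⟨hne_top, hgint⟩
    have e2 : ctrlCost l t₀ z = (((∫ t in Ici t₀, l t (z.1 t) (z.2 t)) : ℝ) : EReal) := by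
      rw [ctrlCost, if_pos hcost]
    rw [e1, e2]
    apply EReal.coe_le_coe_iff.2
    apply integral_mono_ae hgint hcost
    filter_upwards [hb] with t ht using ht.2
  · have : ctrlCost l t₀ z = ⊤ := by rw [ctrlCost, if_neg hcost]
    rw [this]
    exact le_top

/-- From a finite-cost trajectory to a control pair with equal cost. -/
lemma ctrl_of_traj (U : ℝ → Set (Euc M)) (f : ℝ → Euc N → Euc M → Euc N)
    (l : ℝ → Euc N → Euc M → ℝ) (A : Set (Euc N)) (H : ℝ → Euc N → Euc N → ℝ)
    (hUmeas : ∀ O : Set (Euc M), IsOpen O → MeasurableSet {t : ℝ | (U t ∩ O).Nonempty})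
    (hUne : ∀ t, (U t).Nonempty ∧ IsClosed (U t))
    (hHmeas : ∀ x p, Measurable fun t => H t x p)
    (hHcont : ∀ t p, Continuous fun x => H t x p)
    (hHconv : ∀ t x, ConvexOn ℝ univ (H t x))
    (hfmeas : ∀ x u, Measurable fun t => f t x u)
    (hlmeas : ∀ x u, Measurable fun t => l t x u)
    (hfcont : ∀ t, Continuous fun z : Euc N × Euc M => f t z.1 z.2)
    (hlcont : ∀ t, Continuous fun z : Euc N × Euc M => l t z.1 z.2)
    (hepi1 : ∀ t x, gphConj (H t x) ⊆ flimg U f l t x)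
    {t₀ : ℝ} {x₀ : Euc N}
    (p : (ℝ → Euc N) × (ℝ → Euc N)) (hp : p ∈ SH H A t₀ x₀)
    (hint : IntegrableOn (fun t => (Hstar H t (p.1 t) (p.2 t)).toReal) (Ici t₀)) :
    ∃ u : ℝ → Euc M, (p.1, u) ∈ Sf U f A t₀ x₀ ∧
      ctrlCost l t₀ (p.1, u) = trajCost H t₀ p := by
  obtain ⟨htraj, hx0, hxA, hae⟩ := hp
  set μ := volume.restrict (Ici t₀) with hμ
  have hxm : AEMeasurable p.1 μ :=
    (continuousOn_of_traj htraj).aemeasurable measurableSet_Ici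
  have hdxm : AEMeasurable p.2 μ := aemeasurable_deriv_of_traj htraj
  have hHm : AEMeasurable (fun t => Hstar H t (p.1 t) (p.2 t)) μ :=
    aemeasurable_hstar H hHmeas hHcont hHconv hxm hdxm
  set gfun : ℝ → ℝ := fun t => (Hstar H t (p.1 t) (p.2 t)).toReal with hgfun
  have hgm : AEMeasurable gfun μ := hHm.ereal_toReal
  set X : ℝ → Euc N := hxm.mk p.1 with hX
  set Vv : ℝ → Euc N := hdxm.mk p.2 with hVv
  set g : ℝ → ℝ := hgm.mk gfun with hg
  set G : ℝ → Euc M → ℝ := fun t u =>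
    ‖f t (X t) u - Vv t‖ + |l t (X t) u - g t| + Metric.infDist u (U t) with hG
  have hGm : ∀ u, Measurable fun t => G t u := by
    intro u
    have hf1 : Measurable fun t => f t (X t) u := by
      have hj : Measurable (Function.uncurry fun y s => f s y u) :=
        measurable_uncurry_of_continuous_of_measurable
          (fun s => (hfcont s).comp (continuous_id.prodMk continuous_const))
          (fun y => hfmeas y u)
      exact hj.comp (hxm.measurable_mk.prodMk measurable_id)
    have hl1 : Measurable fun t => l t (X t) u := by
      have hj : Measurable (Function.uncurry fun y s => l s y u) :=
        measurable_uncurry_of_continuous_of_measurable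
          (fun s => (hlcont s).comp (continuous_id.prodMk continuous_const))
          (fun y => hlmeas y u)
      exact hj.comp (hxm.measurable_mk.prodMk measurable_id)
    exact (((hf1.sub hdxm.measurable_mk).norm).add
      ((hl1.sub hgm.measurable_mk).abs)).add (measurable_infDistU U hUmeas hUne u)
  have hGc : ∀ t, Continuous (G t) := by
    intro t
    have hf1 : Continuous fun u => f t (X t) u :=
      (hfcont t).comp (continuous_const.prodMk continuous_id)
    have hl1 : Continuous fun u => l t (X t) u :=
      (hlcont t).comp (continuous_const.prodMk continuous_id)
    exact (((hf1.sub continuous_const).norm).add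
      ((hl1.sub continuous_const).abs)).add (Metric.continuous_infDist_pt (U t))
  have hG0 : ∀ t u, 0 ≤ G t u := by
    intro t u
    have h3 := Metric.infDist_nonneg (s := U t) (x := u)
    have h1 := norm_nonneg (f t (X t) u - Vv t)
    have h2 := abs_nonneg (l t (X t) u - g t)
    simp only [hG]
    linarith
  obtain ⟨T, sel, hTmeas, hselm, hTsub, hsel0⟩ := exists_selection_global G hGm hGc hG0
  have hEV : ∀ᵐ t ∂μ, X t = p.1 t ∧ Vv t = p.2 t ∧ g t = gfun t ∧
      Hstar H t (p.1 t) (p.2 t) ≠ ⊤ := by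
    filter_upwards [hxm.ae_eq_mk, hdxm.ae_eq_mk, hgm.ae_eq_mk, hae] with t h1 h2 h3 h4
    exact ⟨h1.symm, h2.symm, h3.symm, h4⟩
  have hgood : ∀ᵐ t ∂μ, sel t ∈ U t ∧ f t (p.1 t) (sel t) = p.2 t ∧
      l t (p.1 t) (sel t) = gfun t := by
    filter_upwards [hEV] with t ht
    obtain ⟨hXe, hVe, hge, htop⟩ := ht
    have hex : ∃ u, G t u = 0 := by
      have hgph : ((p.2 t, gfun t) : Euc N × ℝ) ∈ gphConj (H t (p.1 t)) := by
        show conj (H t (p.1 t)) (p.2 t) = ((gfun t : ℝ) : EReal)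
        exact (EReal.coe_toReal htop (conj_ne_bot _ _)).symm
      obtain ⟨u, huU, hu⟩ := hepi1 t (p.1 t) hgph
      refine ⟨u, ?_⟩
      have h1 : f t (p.1 t) u = p.2 t := congrArg Prod.fst hu
      have h2 : l t (p.1 t) u = gfun t := congrArg Prod.snd hu
      simp [hG, hXe, hVe, hge, h1, h2, Metric.infDist_zero_of_mem huU]
    have h0 := hsel0 t (hTsub t hex)
    have a1 := norm_nonneg (f t (X t) (sel t) - Vv t)
    have a2 := abs_nonneg (l t (X t) (sel t) - g t)
    have a3 := Metric.infDist_nonneg (s := U t) (x := sel t)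
    simp only [hG] at h0
    have e1 : f t (X t) (sel t) = Vv t := by
      have : ‖f t (X t) (sel t) - Vv t‖ = 0 := by linarith
      rwa [norm_sub_eq_zero_iff] at this
    have e2 : l t (X t) (sel t) = g t := by
      have : |l t (X t) (sel t) - g t| = 0 := by linarith
      have := abs_eq_zero.1 this
      linarith
    have e3 : sel t ∈ U t := by
      have : Metric.infDist (sel t) (U t) = 0 := by linarith
      exact ((hUne t).2.mem_iff_infDist_zero (hUne t).1).2 this
    rw [hXe, hVe] at e1
    rw [hXe, hge] at e2
    exact ⟨e3, e1, e2⟩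
  have hglobal : ∀ᵐ t ∂volume, t ∈ Ici t₀ → (sel t ∈ U t ∧ f t (p.1 t) (sel t) = p.2 t ∧
      l t (p.1 t) (sel t) = gfun t) := (ae_restrict_iff' measurableSet_Ici).1 hgood
  refine ⟨sel, ⟨hselm, ?_, ?_, hx0, hxA, ?_⟩, ?_⟩
  · filter_upwards [hgood] with t ht using ht.1
  · intro b
    apply (htraj.1 b).congr
    have : ∀ᵐ s ∂(volume.restrict (Icc t₀ b)), f s (p.1 s) (sel s) = p.2 s := by
      have := ae_restrict_of_ae_restrict_of_subset
        (Icc_subset_Ici_self : Icc t₀ b ⊆ Ici t₀) hgood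
      filter_upwards [this] with s hs using hs.2.1
    filter_upwards [this] with s hs using hs.symm
  · intro t ht
    rw [htraj.2 t ht, hx0]
    congr 1
    apply intervalIntegral.integral_congr_ae
    filter_upwards [hglobal] with s hs hsIoc
    rw [uIoc_of_le ht] at hsIoc
    exact (hs (le_of_lt hsIoc.1)).2.1.symm
  · have hlint : IntegrableOn (fun t => l t (p.1 t) (sel t)) (Ici t₀) := by
      apply hint.congr
      filter_upwards [hgood] with t ht using ht.2.2.symm
    have e1 : ctrlCost l t₀ (p.1, sel)
        = (((∫ t in Ici t₀, l t (p.1 t) (sel t)) : ℝ) : EReal) := by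
      rw [ctrlCost, if_pos hlint]
    have e2 : trajCost H t₀ p = (((∫ t in Ici t₀, gfun t) : ℝ) : EReal) := by
      rw [trajCost, if_pos]
      exact ⟨hae, hint⟩
    rw [e1, e2]
    congr 1
    apply integral_congr_ae
    filter_upwards [hgood] with t ht using ht.2.2

end Bridge

/-- Theorem `eqw-fws`. If `(U,f,l)` is an epigraphical
representation of `H` (with the stated regularity), then `V = 𝒱` on `[0,∞) × A`,
optimal trajectories of `V` yield optimal pairs of `𝒱` and conversely. -/
theorem stmt_8 {N M : ℕ} (U : ℝ → Set (Euc M)) (f : ℝ → Euc N → Euc M → Euc N)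
    (l : ℝ → Euc N → Euc M → ℝ) (A : Set (Euc N))
    (H : ℝ → Euc N → Euc N → ℝ) (φ : ℝ → ℝ)
    (hA : A.Nonempty) (hAcl : IsClosed A)
    (hUmeas : ∀ O : Set (Euc M), IsOpen O →
      MeasurableSet {t : ℝ | (U t ∩ O).Nonempty})
    (hUne : ∀ t, (U t).Nonempty ∧ IsClosed (U t))
    (hHmeas : ∀ x p, Measurable fun t => H t x p)
    (hHcont : ∀ t p, Continuous fun x => H t x p)
    (hHconv : ∀ t x, ConvexOn ℝ univ (H t x))
    (hφ : MemL1 φ) (hH2 : ∀ t, 0 ≤ t → ∀ x, H t x 0 ≤ -φ t)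
    (hfmeas : ∀ x u, Measurable fun t => f t x u)
    (hlmeas : ∀ x u, Measurable fun t => l t x u)
    (hfcont : ∀ t, Continuous fun z : Euc N × Euc M => f t z.1 z.2)
    (hlcont : ∀ t, Continuous fun z : Euc N × Euc M => l t z.1 z.2)
    (hlφ : ∀ t, 0 ≤ t → ∀ x u, φ t ≤ l t x u)
    -- (U,f,l) is a representation of H ...
    (hrep : ∀ t x p, IsLUB
      {r : ℝ | ∃ u ∈ U t, r = (inner ℝ p (f t x u) : ℝ) - l t x u} (H t x p))
    -- ... which is epigraphical
    (hepi : ∀ t x, gphConj (H t x) ⊆ flimg U f l t x ∧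
      flimg U f l t x ⊆ epiConj (H t x)) :
    (∀ t₀, 0 ≤ t₀ → ∀ x₀ ∈ A,
      valueV H A t₀ x₀ = valueVc U f l A t₀ x₀) ∧
    (∀ t₀, 0 ≤ t₀ → ∀ x₀ ∈ A, valueV H A t₀ x₀ ≠ ⊤ →
      -- optimal trajectory of V gives an optimal pair of 𝒱
      (∀ p ∈ SH H A t₀ x₀, trajCost H t₀ p = valueV H A t₀ x₀ →
        ∃ u : ℝ → Euc M, (p.1, u) ∈ Sf U f A t₀ x₀ ∧
          ctrlCost l t₀ (p.1, u) = valueVc U f l A t₀ x₀) ∧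
      -- optimal pair of 𝒱 gives an optimal trajectory of V
      (∀ z ∈ Sf U f A t₀ x₀, ctrlCost l t₀ z = valueVc U f l A t₀ x₀ →
        ∃ dx : ℝ → Euc N, (z.1, dx) ∈ SH H A t₀ x₀ ∧
          trajCost H t₀ (z.1, dx) = valueV H A t₀ x₀)) := by
  have hepi1 : ∀ t x, gphConj (H t x) ⊆ flimg U f l t x := fun t x => (hepi t x).1
  have hepi2 : ∀ t x, flimg U f l t x ⊆ epiConj (H t x) := fun t x => (hepi t x).2
  have hVeq : ∀ t₀, 0 ≤ t₀ → ∀ x₀ ∈ A, valueV H A t₀ x₀ = valueVc U f l A t₀ x₀ := by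
    intro t₀ ht₀ x₀ hx₀
    apply le_antisymm
    · apply le_sInf
      rintro b ⟨z, hz, rfl⟩
      obtain ⟨hSH, hle⟩ :=
        traj_of_ctrl U f l A H φ hHmeas hHcont hHconv hφ hH2 hepi2 ht₀ z hz
      exact le_trans (sInf_le (mem_image_of_mem _ hSH)) hle
    · apply le_sInf
      rintro b ⟨p, hp, rfl⟩
      by_cases hfin : (∀ᵐ t ∂(volume.restrict (Ici t₀)),
            Hstar H t (p.1 t) (p.2 t) ≠ ⊤) ∧
          IntegrableOn (fun t => (Hstar H t (p.1 t) (p.2 t)).toReal) (Ici t₀)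
      · obtain ⟨u, hu, hcost⟩ := ctrl_of_traj U f l A H hUmeas hUne hHmeas hHcont
          hHconv hfmeas hlmeas hfcont hlcont hepi1 p hp hfin.2
        calc valueVc U f l A t₀ x₀ ≤ ctrlCost l t₀ (p.1, u) :=
              sInf_le (mem_image_of_mem _ hu)
          _ = trajCost H t₀ p := hcost
      · have : trajCost H t₀ p = ⊤ := by rw [trajCost, if_neg hfin]
        rw [this]
        exact le_top
  refine ⟨hVeq, ?_⟩
  intro t₀ ht₀ x₀ hx₀ hVne
  constructor
  · intro p hp hopt
    have hfin : (∀ᵐ t ∂(volume.restrict (Ici t₀)),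
          Hstar H t (p.1 t) (p.2 t) ≠ ⊤) ∧
        IntegrableOn (fun t => (Hstar H t (p.1 t) (p.2 t)).toReal) (Ici t₀) := by
      by_contra hc
      rw [trajCost, if_neg hc] at hopt
      exact hVne hopt.symm
    obtain ⟨u, hu, hcost⟩ := ctrl_of_traj U f l A H hUmeas hUne hHmeas hHcont
      hHconv hfmeas hlmeas hfcont hlcont hepi1 p hp hfin.2
    exact ⟨u, hu, by rw [hcost, hopt, hVeq t₀ ht₀ x₀ hx₀]⟩
  · intro z hz hopt
    obtain ⟨hSH, hle⟩ :=
      traj_of_ctrl U f l A H φ hHmeas hHcont hHconv hφ hH2 hepi2 ht₀ z hz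
    refine ⟨fun s => f s (z.1 s) (z.2 s), hSH, ?_⟩
    apply le_antisymm
    · rw [hopt, ← hVeq t₀ ht₀ x₀ hx₀] at hle
      exact hle
    · exact sInf_le (mem_image_of_mem _ hSH)


end HJB
end
end
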